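/- arXiv:2509.26119 — 11 statements merged into one kernel-verified Lean document; each statement's English description precedes it below -/
import Mathlib

section
/- For all natural numbers n ≥ 2 and 0 ≤ w ≤ n, the total number of runs summed over all binary sequences of length n with Hamming weight w equals C(n,w) + 2(n-1)·C(n-2, w-1). -/
/-- The number of runs of a binary sequence: the length of the list after
merging maximal blocks of consecutive equal symbols. -/
def numRuns (l : List Bool) : ℕ := (l.destutter (· ≠ ·)).length

/-- The Hamming weight (number of ones) of a binary sequence. -/
def wt {n : ℕ} (x : Fin n → Bool) : ℕ :=
  (Finset.univ.filter fun p => x p = true).card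

open Finset

namespace Stmt4Aux

def dcount : Bool → List Bool → ℕ
  | _, [] => 0
  | a, b :: l => (if a = b then 0 else 1) + dcount b l

lemma destutter'_length : ∀ (l : List Bool) (a : Bool),
    (List.destutter' (· ≠ ·) a l).length = 1 + dcount a l
  | [], a => by simp [List.destutter', dcount]
  | b :: l, a => by
    by_cases h : a = b
    · simp [List.destutter', h, dcount, destutter'_length l b]
    · simp [List.destutter', h, dcount, destutter'_length l b]; omega

lemma dcount_ofFn : ∀ (k : ℕ) (z : Fin (k + 1) → Bool),
    dcount (z 0) (List.ofFn fun i : Fin k => z i.succ) =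
      ∑ i : Fin k, if z i.castSucc = z i.succ then 0 else 1
  | 0, z => by simp [dcount]
  | k + 1, z => by
    rw [List.ofFn_succ, Fin.sum_univ_succ]
    show (if z 0 = z 1 then 0 else 1) + dcount (z 1) _ = _
    have := dcount_ofFn k (fun i => z i.succ)
    simp only [Fin.succ_zero_eq_one] at this
    rw [this]
    simp [Fin.succ_castSucc, Fin.castSucc_zero, -Fin.castSucc_succ]
    rfl

lemma numRuns_ofFn (m : ℕ) (x : Fin (m + 2) → Bool) :
    numRuns (List.ofFn x) = 1 + ∑ i : Fin (m + 1), if x i.castSucc = x i.succ then 0 else 1 := by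
  rw [List.ofFn_succ]
  show (List.destutter' (· ≠ ·) (x 0) _).length = _
  rw [destutter'_length, dcount_ofFn]

def supp {n : ℕ} (x : Fin n → Bool) : Finset (Fin n) := univ.filter fun p => x p = true

lemma wt_eq {n : ℕ} (x : Fin n → Bool) : wt x = (supp x).card := rfl

lemma mem_supp {n : ℕ} (x : Fin n → Bool) (k : Fin n) : k ∈ supp x ↔ x k = true := by
  simp [supp]

lemma card_wt (n w : ℕ) :
    (univ.filter fun x : Fin n → Bool => wt x = w).card = n.choose w := by
  have := Finset.card_bij' (s := univ.filter fun x : Fin n → Bool => wt x = w)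
    (t := (univ : Finset (Fin n)).powersetCard w)
    (i := fun x _ => supp x) (j := fun s _ => fun k => decide (k ∈ s))
    (hi := by intro x hx; simp only [mem_filter, mem_univ, true_and] at hx
              simp [mem_powersetCard, ← wt_eq, hx])
    (hj := by intro s hs
              simp only [mem_powersetCard, subset_univ, true_and] at hs
              simp only [mem_filter, mem_univ, true_and]; rw [wt_eq]
              rw [show supp (fun k => decide (k ∈ s)) = s by ext k; simp [mem_supp]]
              exact hs)
    (left_inv := by intro x hx; funext k; cases h : x k <;> simp [mem_supp, h])
    (right_inv := by intro s hs; ext k; simp [mem_supp])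
  rw [this, Finset.card_powersetCard, Finset.card_univ, Fintype.card_fin]

lemma card_pair (n w : ℕ) (hw : 1 ≤ w) (i j : Fin n) (hij : i ≠ j) :
    (univ.filter fun x : Fin n → Bool => wt x = w ∧ x i = true ∧ x j = false).card
      = (n - 2).choose (w - 1) := by
  have hcard : (((univ : Finset (Fin n)).erase i).erase j).card = n - 2 := by
    rw [Finset.card_erase_of_mem (by simp [Finset.mem_erase, hij.symm]),
      Finset.card_erase_of_mem (mem_univ i), Finset.card_univ, Fintype.card_fin]; omega
  have := Finset.card_bij'
    (s := univ.filter fun x : Fin n → Bool => wt x = w ∧ x i = true ∧ x j = false)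
    (t := (((univ : Finset (Fin n)).erase i).erase j).powersetCard (w - 1))
    (i := fun x _ => (supp x).erase i) (j := fun s _ => fun k => decide (k = i ∨ k ∈ s))
    (hi := by
      intro x hx
      simp only [mem_filter, mem_univ, true_and] at hx
      obtain ⟨hwt, hxi, hxj⟩ := hx
      rw [mem_powersetCard]
      constructor
      · intro k hk
        rw [Finset.mem_erase] at hk
        obtain ⟨hki, hks⟩ := hk
        rw [mem_supp] at hks
        have hkj : k ≠ j := by rintro rfl; rw [hks] at hxj; simp at hxj
        simp [Finset.mem_erase, hki, hkj]
      · rw [Finset.card_erase_of_mem ((mem_supp x i).2 hxi), ← wt_eq, hwt])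
    (hj := by
      intro s hs
      rw [mem_powersetCard] at hs
      obtain ⟨hsub, hcards⟩ := hs
      have hi_not : i ∉ s := by
        intro h; have := hsub h; rw [Finset.mem_erase, Finset.mem_erase] at this
        exact this.2.1 rfl
      have hj_not : j ∉ s := by
        intro h; have := hsub h; rw [Finset.mem_erase] at this; exact this.1 rfl
      have hsupp : supp (fun k => decide (k = i ∨ k ∈ s)) = insert i s := by
        ext k; simp [mem_supp]
      simp only [mem_filter, mem_univ, true_and]
      refine ⟨?_, by simp, ?_⟩
      · rw [wt_eq, hsupp, Finset.card_insert_of_notMem hi_not, hcards]; omega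
      · simp [hij.symm, hj_not])
    (left_inv := by
      intro x hx
      simp only [mem_filter, mem_univ, true_and] at hx
      funext k
      by_cases hk : k = i
      · subst hk; simp [hx.2.1]
      · cases h : x k <;> simp [Finset.mem_erase, mem_supp, hk, h])
    (right_inv := by
      intro s hs
      rw [mem_powersetCard] at hs
      have hi_not : i ∉ s := by
        intro h; have := hs.1 h; rw [Finset.mem_erase, Finset.mem_erase] at this
        exact this.2.1 rfl
      have hsupp : supp (fun k => decide (k = i ∨ k ∈ s)) = insert i s := by
        ext k; simp [mem_supp]
      show (supp fun k => decide (k = i ∨ k ∈ s)).erase i = s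
      rw [hsupp, Finset.erase_insert hi_not])
  rw [this, Finset.card_powersetCard, hcard]

lemma card_ne (n w : ℕ) (hw : 1 ≤ w) (i j : Fin n) (hij : i ≠ j) :
    (univ.filter fun x : Fin n → Bool => wt x = w ∧ ¬ x i = x j).card
      = 2 * (n - 2).choose (w - 1) := by
  have hsplit : (univ.filter fun x : Fin n → Bool => wt x = w ∧ ¬ x i = x j)
      = (univ.filter fun x : Fin n → Bool => wt x = w ∧ x i = true ∧ x j = false)
        ∪ (univ.filter fun x : Fin n → Bool => wt x = w ∧ x j = true ∧ x i = false) := by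
    ext x
    cases hxi : x i <;> cases hxj : x j <;>
      simp [mem_filter, mem_union, hxi, hxj]
  have hdisj : Disjoint
      (univ.filter fun x : Fin n → Bool => wt x = w ∧ x i = true ∧ x j = false)
      (univ.filter fun x : Fin n → Bool => wt x = w ∧ x j = true ∧ x i = false) := by
    rw [Finset.disjoint_left]
    intro x hx1 hx2
    simp only [mem_filter] at hx1 hx2
    rw [hx1.2.2.1] at hx2
    simp at hx2
  rw [hsplit, Finset.card_union_of_disjoint hdisj, card_pair n w hw i j hij,
    card_pair n w hw j i hij.symm]
  omega

lemma card_ne_w0 (n : ℕ) (i j : Fin n) :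
    (univ.filter fun x : Fin n → Bool => wt x = 0 ∧ ¬ x i = x j).card = 0 := by
  rw [Finset.card_eq_zero, Finset.filter_eq_empty_iff]
  intro x _
  rw [not_and]
  intro hwt
  have : ∀ k, x k = false := by
    intro k
    by_contra h
    have hk : k ∈ supp x := by rw [mem_supp]; simpa using h
    rw [wt_eq, Finset.card_eq_zero] at hwt
    rw [hwt] at hk
    simp at hk
  simp [this i, this j]

end Stmt4Aux

open Stmt4Aux in
/-- For `n ≥ 2` and `0 ≤ w ≤ n`, the total number of runs summed over all binary sequences
of length `n` with Hamming weight `w` equals `C(n,w) + 2(n-1)·C(n-2, w-1)`, with the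
convention that `C(n-2, w-1) = 0` when `w = 0`. -/
theorem stmt_4 (n w : ℕ) (hn : 2 ≤ n) (hw : w ≤ n) :
    ∑ x ∈ Finset.univ.filter (fun x : Fin n → Bool => wt x = w),
        numRuns (List.ofFn x)
      = n.choose w + 2 * (n - 1) * (if w = 0 then 0 else (n - 2).choose (w - 1)) := by
  obtain ⟨m, rfl⟩ : ∃ m, n = m + 2 := ⟨n - 2, by omega⟩
  set F := Finset.univ.filter (fun x : Fin (m + 2) → Bool => wt x = w) with hF
  have step1 : ∑ x ∈ F, numRuns (List.ofFn x)
      = F.card + ∑ i : Fin (m + 1),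
          (univ.filter fun x : Fin (m + 2) → Bool =>
            wt x = w ∧ ¬ x i.castSucc = x i.succ).card := by
    rw [Finset.sum_congr rfl (fun x _ => numRuns_ofFn m x), Finset.sum_add_distrib,
      Finset.sum_const, smul_eq_mul, mul_one, Finset.sum_comm]
    congr 1
    refine Finset.sum_congr rfl fun i _ => ?_
    rw [← Finset.filter_filter, ← hF, Finset.card_filter]
    refine Finset.sum_congr rfl fun x _ => ?_
    by_cases h : x i.castSucc = x i.succ <;> simp [h]
  have hFcard : F.card = (m + 2).choose w := card_wt (m + 2) w
  rcases Nat.eq_zero_or_pos w with hw0 | hw1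
  · subst hw0
    simp only [if_pos rfl, mul_zero, add_zero]
    rw [step1, hFcard, Finset.sum_congr rfl fun i (_ : i ∈ univ) => card_ne_w0 (m+2) i.castSucc i.succ]
    simp
  · have hne : ∀ i : Fin (m + 1), i.castSucc ≠ i.succ :=
      fun i => (Fin.castSucc_lt_succ (i := i)).ne
    rw [step1, hFcard]
    have : ∀ i : Fin (m + 1),
        (univ.filter fun x : Fin (m + 2) → Bool =>
          wt x = w ∧ ¬ x i.castSucc = x i.succ).card = 2 * m.choose (w - 1) := by
      intro i
      have := card_ne (m + 2) w hw1 i.castSucc i.succ (hne i)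
      simpa using this
    have hsum : ∑ i : Fin (m + 1),
        (univ.filter fun x : Fin (m + 2) → Bool =>
          wt x = w ∧ ¬ x i.castSucc = x i.succ).card = (m + 1) * (2 * m.choose (w - 1)) := by
      rw [Finset.sum_congr rfl fun i _ => this i, Finset.sum_const, Finset.card_univ,
        Fintype.card_fin, smul_eq_mul]
    rw [hsum, if_neg (Nat.pos_iff_ne_zero.mp hw1)]
    show (m + 2).choose w + (m + 1) * (2 * m.choose (w - 1))
      = (m + 2).choose w + 2 * (m + 1) * m.choose (w - 1)
    ring
end

section
/- Let y₀ be a binary sequence of length n-1 with Hamming weight w. Then the number of distinct binary sequences s₁ of length n for which there exists a binary sequence s₀ of length n that is a supersequence of y₀ (obtained by inserting one bit into y₀) and satisfies s₀ ≤ s₁ componentwise, equals 2^(n-w) + w·2^(n-w-1). -/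
namespace Stmt5Aux

attribute [local instance] Classical.propDecidable

/-- all boolean lists of length `k` -/
def L : ℕ → Finset (List Bool)
  | 0 => {[]}
  | k+1 => ((Finset.univ : Finset Bool) ×ˢ L k).image fun p => p.1 :: p.2

lemma cons_inj : Function.Injective (fun p : Bool × List Bool => p.1 :: p.2) := by
  rintro ⟨a, b⟩ ⟨c, d⟩ h
  simp_all

lemma mem_L {k : ℕ} {l : List Bool} : l ∈ L k ↔ l.length = k := by
  induction k generalizing l with
  | zero => simp [L, List.length_eq_zero_iff]
  | succ k ih =>
    simp only [L, Finset.mem_image, Finset.mem_product, Finset.mem_univ, true_and]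
    constructor
    · rintro ⟨⟨c, t⟩, ht, rfl⟩
      simp [ih.mp ht]
    · intro h
      cases l with
      | nil => simp at h
      | cons c t => exact ⟨⟨c, t⟩, ih.mpr (by simpa using h), rfl⟩

lemma card_L (k : ℕ) : (L k).card = 2 ^ k := by
  induction k with
  | zero => simp [L]
  | succ k ih =>
    rw [L, Finset.card_image_of_injective _ cons_inj, Finset.card_product, ih]
    simp [pow_succ, mul_comm]

lemma up_card (y : List Bool) :
    ((L y.length).filter fun s => List.Forall₂ (· ≤ ·) y s).card
      = 2 ^ (y.length - y.count true) := by
  induction y with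
  | nil =>
    have : ((L ([] : List Bool).length).filter
        fun s => List.Forall₂ (· ≤ ·) ([] : List Bool) s) = {[]} := by
      ext l; simp [L, List.forall₂_nil_left_iff, eq_comm]
    rw [this]
    simp
  | cons b y ih =>
    have key : ((L (b :: y).length).filter fun s => List.Forall₂ (· ≤ ·) (b :: y) s)
        = ((Finset.univ.filter fun c => b ≤ c) ×ˢ
            ((L y.length).filter fun s => List.Forall₂ (· ≤ ·) y s)).image
            fun p => p.1 :: p.2 := by
      ext l
      simp only [Finset.mem_filter, Finset.mem_image, Finset.mem_product, Finset.mem_univ,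
        true_and, mem_L, List.length_cons]
      constructor
      · rintro ⟨hlen, hf⟩
        cases l with
        | nil => simp at hlen
        | cons c t =>
          rw [List.forall₂_cons] at hf
          exact ⟨⟨c, t⟩, ⟨⟨hf.1, by simpa using hlen, hf.2⟩, rfl⟩⟩
      · rintro ⟨⟨c, t⟩, ⟨hb, hlen, hf⟩, rfl⟩
        exact ⟨by simp [hlen], List.forall₂_cons.mpr ⟨hb, hf⟩⟩
    rw [key, Finset.card_image_of_injective _ cons_inj, Finset.card_product, ih]
    have hcl : y.count true ≤ y.length := List.count_le_length
    cases b with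
    | false =>
      have : (Finset.univ.filter fun c => (false : Bool) ≤ c) = Finset.univ := by
        ext c; simp [Bool.false_le]
      rw [this]
      simp only [List.count_cons, List.length_cons]
      norm_num
      rw [show y.length + 1 - y.count true = (y.length - y.count true) + 1 by omega]
      ring
    | true =>
      have : (Finset.univ.filter fun c => (true : Bool) ≤ c) = {true} := by
        ext c; cases c <;> simp
      rw [this]
      simp [List.count_cons]

def P' (y s : List Bool) : Prop := ∃ s₀, y.Sublist s₀ ∧ List.Forall₂ (· ≤ ·) s₀ s

noncomputable def S (y : List Bool) : Finset (List Bool) :=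
  (L (y.length + 1)).filter fun s => P' y s

lemma P'_up {b : Bool} {y s : List Bool} (h : List.Forall₂ (· ≤ ·) (b :: y) s) : P' y s := by
  refine ⟨false :: y, List.sublist_cons_self _ _, ?_⟩
  cases s with
  | nil => exact absurd h.length_eq (by simp)
  | cons c t =>
    rw [List.forall₂_cons] at h ⊢
    exact ⟨Bool.false_le _, h.2⟩

lemma P'_cons {b : Bool} {y : List Bool} {c : Bool} {s : List Bool}
    (hlen : s.length = y.length + 1) :
    P' (b :: y) (c :: s) ↔ (List.Forall₂ (· ≤ ·) (b :: y) s) ∨ (b ≤ c ∧ P' y s) := by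
  constructor
  · rintro ⟨s₀, hsub, hf⟩
    cases s₀ with
    | nil => exact absurd hf.length_eq (by simp)
    | cons x t =>
      rw [List.forall₂_cons] at hf
      cases hsub
      case cons h =>
        left
        have hlt : (b :: y).length = t.length := by
          have := hf.2.length_eq; simp only [List.length_cons]; omega
        rw [h.eq_of_length hlt]
        exact hf.2
      case cons_cons h =>
        right
        exact ⟨hf.1, t, h, hf.2⟩
  · rintro (h | ⟨hbc, s₀, hsub, hf⟩)
    · exact ⟨false :: b :: y, List.sublist_cons_self _ _,
        List.forall₂_cons.mpr ⟨Bool.false_le _, h⟩⟩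
    · exact ⟨b :: s₀, hsub.cons₂ _, List.forall₂_cons.mpr ⟨hbc, hf⟩⟩

lemma card_S (y : List Bool) :
    (S y).card = 2 ^ (y.length + 1 - y.count true)
      + y.count true * 2 ^ (y.length - y.count true) := by
  induction y with
  | nil =>
    have hall : ∀ s ∈ L (List.length ([] : List Bool) + 1), P' [] s := by
      intro s hs
      rw [mem_L] at hs
      cases s with
      | nil => simp at hs
      | cons c t =>
        refine ⟨[false], List.nil_sublist _, ?_⟩
        have ht : t = [] := by simpa using hs
        subst ht
        exact List.forall₂_cons.mpr ⟨Bool.false_le _, List.Forall₂.nil⟩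
    have h0 : S [] = L 1 := by
      rw [S, Finset.filter_true_of_mem hall]
      simp
    rw [h0, card_L]
    simp
  | cons b y ih =>
    have hcl : y.count true ≤ y.length := List.count_le_length
    cases b with
    | false =>
      have key : S (false :: y) = (Finset.univ ×ˢ S y).image fun p => p.1 :: p.2 := by
        ext l
        simp only [S, Finset.mem_filter, mem_L, Finset.mem_image, Finset.mem_product,
          Finset.mem_univ, true_and, List.length_cons]
        constructor
        · rintro ⟨hlen, hp⟩
          cases l with
          | nil => simp at hlen
          | cons c t =>
            have hlt : t.length = y.length + 1 := by simpa using hlen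
            rw [P'_cons hlt] at hp
            refine ⟨⟨c, t⟩, ⟨hlt, ?_⟩, rfl⟩
            rcases hp with h | h
            · exact P'_up h
            · exact h.2
        · rintro ⟨⟨c, t⟩, ⟨hlt, hp⟩, rfl⟩
          exact ⟨by simp [hlt], (P'_cons hlt).mpr (Or.inr ⟨Bool.false_le _, hp⟩)⟩
      rw [key, Finset.card_image_of_injective _ cons_inj, Finset.card_product, ih]
      simp only [List.count_cons, List.length_cons]
      norm_num
      rw [show y.length + 1 + 1 - y.count true = (y.length + 1 - y.count true) + 1 by omega,
        show y.length + 1 - y.count true = (y.length - y.count true) + 1 by omega]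
      ring
    | true =>
      have hF := up_card (true :: y)
      set F := ((L (true :: y).length).filter
        fun s => List.Forall₂ (· ≤ ·) (true :: y) s) with hFdef
      set A := (Finset.univ ×ˢ F).image (fun p : Bool × List Bool => p.1 :: p.2) with hAdef
      set B := (S y).image (fun s => true :: s) with hBdef
      have key : S (true :: y) = A ∪ B := by
        ext l
        simp only [S, Finset.mem_filter, mem_L, List.length_cons, Finset.mem_union, hAdef,
          hBdef, hFdef, Finset.mem_image, Finset.mem_product, Finset.mem_univ, true_and]
        constructor
        · rintro ⟨hlen, hp⟩
          cases l with
          | nil => simp at hlen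
          | cons c t =>
            have hlt : t.length = y.length + 1 := by simpa using hlen
            rw [P'_cons hlt] at hp
            rcases hp with h | ⟨hbc, h⟩
            · exact Or.inl ⟨⟨c, t⟩, ⟨hlt, h⟩, rfl⟩
            · have hc : c = true := by
                cases c
                · exact absurd hbc (by simp)
                · rfl
              subst hc
              exact Or.inr ⟨t, ⟨hlt, h⟩, rfl⟩
        · rintro (⟨⟨c, t⟩, ht, rfl⟩ | ⟨t, ht, rfl⟩)
          · exact ⟨by simp [ht.1], (P'_cons ht.1).mpr (Or.inl ht.2)⟩
          · exact ⟨by simp [ht.1], (P'_cons ht.1).mpr (Or.inr ⟨le_refl _, ht.2⟩)⟩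
      have hinter : A ∩ B = F.image (fun s => true :: s) := by
        ext l
        simp only [hAdef, hBdef, Finset.mem_inter, Finset.mem_image, Finset.mem_product,
          Finset.mem_univ, true_and]
        constructor
        · rintro ⟨⟨⟨c, t⟩, ht, rfl⟩, ⟨t', ht', heq⟩⟩
          simp only [List.cons.injEq] at heq
          exact ⟨t, ht, by rw [heq.1]⟩
        · rintro ⟨t, ht, rfl⟩
          refine ⟨⟨⟨true, t⟩, ht, rfl⟩, ⟨t, ?_, rfl⟩⟩
          rw [hFdef, Finset.mem_filter, mem_L] at ht
          simp only [S, Finset.mem_filter, mem_L]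
          exact ⟨by simpa using ht.1, P'_up ht.2⟩
      have hcardA : A.card = 2 * F.card := by
        rw [hAdef, Finset.card_image_of_injective _ cons_inj, Finset.card_product]
        simp
      have hcardB : B.card = (S y).card := by
        rw [hBdef, Finset.card_image_of_injective _ List.cons_injective]
      have hcardI : (A ∩ B).card = F.card := by
        rw [hinter, Finset.card_image_of_injective _ List.cons_injective]
      have hiu := Finset.card_union_add_card_inter A B
      rw [hcardI, hcardA, hcardB, ih, hF] at hiu
      rw [key]
      rw [List.count_cons_self, List.length_cons] at hiu ⊢
      rw [show y.length + 1 + 1 - (y.count true + 1) = (y.length - y.count true) + 1 by omega,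
        show y.length + 1 - (y.count true + 1) = y.length - y.count true by omega,
        add_mul, one_mul]
      rw [show y.length + 1 - (y.count true + 1) = y.length - y.count true by omega,
        show y.length + 1 - y.count true = (y.length - y.count true) + 1 by omega] at hiu
      rw [pow_succ] at hiu ⊢
      generalize 2 ^ (y.length - y.count true) = X at hiu ⊢
      generalize hY : y.count true * X = Y at hiu ⊢
      omega

lemma forall₂_ofFn : ∀ {n : ℕ} (f g : Fin n → Bool),
    (List.Forall₂ (· ≤ ·) (List.ofFn f) (List.ofFn g) ↔ ∀ i, f i ≤ g i) := by
  intro n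
  induction n with
  | zero => intro f g; simp [List.ofFn_zero]
  | succ n ih =>
    intro f g
    rw [List.ofFn_succ, List.ofFn_succ, List.forall₂_cons, ih]
    constructor
    · rintro ⟨h0, h⟩ i
      refine Fin.cases h0 (fun j => h j) i
    · intro h
      exact ⟨h 0, fun j => h j.succ⟩

lemma count_ofFn : ∀ (n : ℕ) (f : Fin n → Bool),
    (List.ofFn f).count true = (Finset.univ.filter fun p => f p = true).card := by
  intro n
  induction n with
  | zero => intro f; simp
  | succ n ih =>
    intro f
    rw [List.ofFn_succ, List.count_cons, ih (fun i => f i.succ)]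
    rw [Finset.card_filter, Finset.card_filter, Fin.sum_univ_succ]
    simp [add_comm]

lemma exists_ofFn {k : ℕ} {l : List Bool} (h : l.length = k) :
    ∃ f : Fin k → Bool, List.ofFn f = l := by
  subst h
  exact ⟨l.get, List.ofFn_get l⟩

lemma mem_S_iff {n : ℕ} (y₀ : Fin n → Bool) (s₁ : Fin (n + 1) → Bool) :
    List.ofFn s₁ ∈ S (List.ofFn y₀) ↔
      ∃ s₀ : Fin (n + 1) → Bool,
        (List.ofFn y₀).Sublist (List.ofFn s₀) ∧ ∀ p, s₀ p ≤ s₁ p := by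
  simp only [S, Finset.mem_filter, mem_L, List.length_ofFn]
  constructor
  · rintro ⟨hlen, s₀l, hsub, hf⟩
    have hl : s₀l.length = n + 1 := by
      have := hf.length_eq; simpa using this
    obtain ⟨s₀, rfl⟩ := exists_ofFn hl
    exact ⟨s₀, hsub, (forall₂_ofFn _ _).mp hf⟩
  · rintro ⟨s₀, hsub, hle⟩
    exact ⟨trivial, List.ofFn s₀, hsub, (forall₂_ofFn _ _).mpr hle⟩

end Stmt5Aux

open Stmt5Aux

/-- Let `y₀` be a binary sequence of length `n-1` (with `n ≥ 1`) of Hamming weight `w`.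
The number of binary sequences `s₁` of length `n` for which there exists a binary
sequence `s₀` of length `n` that is a supersequence of `y₀` (obtained by inserting one
bit into `y₀`) and satisfies `s₀ ≤ s₁` componentwise equals `2^(n-w) + w·2^(n-w-1)`. -/
theorem stmt_5 (n : ℕ) (hn : 1 ≤ n) (y₀ : Fin (n - 1) → Bool) (w : ℕ)
    (hw : (Finset.univ.filter fun p => y₀ p = true).card = w) :
    {s₁ : Fin n → Bool | ∃ s₀ : Fin n → Bool,
        (List.ofFn y₀).Sublist (List.ofFn s₀) ∧ ∀ p, s₀ p ≤ s₁ p}.ncard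
      = 2 ^ (n - w) + w * 2 ^ (n - w - 1) := by
  classical
  obtain ⟨m, rfl⟩ : ∃ m, n = m + 1 := ⟨n - 1, by omega⟩
  set setS := {s₁ : Fin (m + 1) → Bool | ∃ s₀ : Fin (m + 1) → Bool,
      (List.ofFn y₀).Sublist (List.ofFn s₀) ∧ ∀ p, s₀ p ≤ s₁ p} with hsetS
  have himg : List.ofFn '' setS = ↑(S (List.ofFn y₀)) := by
    ext l
    simp only [Set.mem_image, hsetS, Set.mem_setOf_eq, Finset.mem_coe]
    constructor
    · rintro ⟨s₁, hs₁, rfl⟩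
      exact (mem_S_iff y₀ s₁).mpr hs₁
    · intro hl
      have hlen : l.length = (m + 1 - 1) + 1 := by
        have := (Finset.mem_filter.mp hl).1
        rw [mem_L] at this
        simpa using this
      obtain ⟨s₁, rfl⟩ := exists_ofFn hlen
      exact ⟨s₁, (mem_S_iff y₀ s₁).mp hl, rfl⟩
  have h1 : setS.ncard = (S (List.ofFn y₀)).card := by
    rw [← Set.ncard_coe_finset, ← himg,
      Set.ncard_image_of_injective _ List.ofFn_injective]
  rw [h1, card_S, List.length_ofFn, count_ofFn, hw]
  rw [show m + 1 - 1 + 1 - w = m + 1 - w by omega,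
    show m + 1 - 1 - w = m + 1 - w - 1 by omega]
end

section
/- The number of pairs (y₀, s₁) with y₀ ∈ {0,1}^(n-1), s₁ ∈ {0,1}^n such that there exists a length-n supersequence s₀ of y₀ with s₀ ≤ s₁ componentwise equals 2·3^(n-1) + (n-1)·3^(n-2). -/
private def SS (m : ℕ) : Set ((Fin m → Bool) × (Fin (m + 1) → Bool)) :=
  {q | ∃ s₀ : Fin (m + 1) → Bool,
    (List.ofFn q.1).Sublist (List.ofFn s₀) ∧ ∀ p, s₀ p ≤ q.2 p}

private def RR (y s : List Bool) : Prop :=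
  ∃ s₀ : List Bool, y.Sublist s₀ ∧ List.Forall₂ (· ≤ ·) s₀ s

private lemma forall₂_ofFn : ∀ {k : ℕ} (f g : Fin k → Bool),
    List.Forall₂ (· ≤ ·) (List.ofFn f) (List.ofFn g) ↔ ∀ i, f i ≤ g i := by
  intro k
  induction k with
  | zero => intro f g; simp
  | succ k ih =>
    intro f g
    rw [List.ofFn_succ, List.ofFn_succ, List.forall₂_cons, ih, Fin.forall_fin_succ]

private lemma mem_SS {m : ℕ} (q : (Fin m → Bool) × (Fin (m + 1) → Bool)) :
    q ∈ SS m ↔ RR (List.ofFn q.1) (List.ofFn q.2) := by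
  constructor
  · rintro ⟨s₀, h1, h2⟩
    exact ⟨List.ofFn s₀, h1, (forall₂_ofFn _ _).2 h2⟩
  · rintro ⟨s₀, h1, h2⟩
    have hlen : s₀.length = m + 1 := by
      have := h2.length_eq; simpa using this
    have key : List.ofFn (fun i : Fin (m + 1) => s₀.get (Fin.cast hlen.symm i)) = s₀ := by
      apply List.ext_get (by simp [hlen])
      intro i hh1 hh2
      simp only [List.get_ofFn]; rfl
    refine ⟨fun i => s₀.get (Fin.cast hlen.symm i), by rw [key]; exact h1, ?_⟩
    intro p
    have := (List.forall₂_iff_get.1 h2).2 p.val (by omega) (by simp; omega)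
    simp only [List.get_ofFn] at this
    exact this


private lemma RR_cons {c a : Bool} {y s : List Bool} :
    RR (c :: y) (a :: s) ↔ RR (c :: y) s ∨ (c ≤ a ∧ RR y s) := by
  constructor
  · rintro ⟨s₀, hsub, hf⟩
    cases s₀ with
    | nil => exact absurd hf.length_eq (by simp)
    | cons b t =>
      rw [List.forall₂_cons] at hf
      cases hsub with
      | cons _ h => exact Or.inl ⟨t, h, hf.2⟩
      | cons_cons _ h => exact Or.inr ⟨hf.1, t, h, hf.2⟩
  · rintro (⟨t, h, hf⟩ | ⟨hca, t, h, hf⟩)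
    · exact ⟨false :: t, h.trans (List.sublist_cons_self _ _),
        List.forall₂_cons.2 ⟨Bool.false_le a, hf⟩⟩
    · exact ⟨c :: t, List.cons_sublist_cons.2 h, List.forall₂_cons.2 ⟨hca, hf⟩⟩

private lemma RR_of_len {y s : List Bool} (h : y.length = s.length) :
    RR y s ↔ List.Forall₂ (· ≤ ·) y s := by
  constructor
  · rintro ⟨s₀, hsub, hf⟩
    have he : y = s₀ := hsub.eq_of_length (by rw [h, hf.length_eq])
    rwa [he]
  · intro hf; exact ⟨y, List.Sublist.refl y, hf⟩


private lemma SS_zero : SS 0 = Set.univ := by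
  ext q
  simp only [SS, Set.mem_setOf_eq, Set.mem_univ, iff_true]
  exact ⟨fun _ => false, by simp, fun p => Bool.false_le _⟩

private lemma mem_SS_succ {m : ℕ} (q : (Fin (m + 1) → Bool) × (Fin (m + 2) → Bool)) :
    q ∈ SS (m + 1) ↔ (∀ i, q.1 i ≤ Fin.tail q.2 i) ∨
      (q.1 0 ≤ q.2 0 ∧ (Fin.tail q.1, Fin.tail q.2) ∈ SS m) := by
  rw [mem_SS, List.ofFn_succ (f := q.1), List.ofFn_succ (f := q.2), RR_cons]
  have h1 : RR (q.1 0 :: List.ofFn fun i => q.1 i.succ) (List.ofFn fun i => q.2 i.succ)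
      ↔ ∀ i, q.1 i ≤ Fin.tail q.2 i := by
    rw [RR_of_len (by simp), ← List.ofFn_succ (f := q.1)]
    exact forall₂_ofFn q.1 (Fin.tail q.2)
  have h2 : RR (List.ofFn fun i => q.1 i.succ) (List.ofFn fun i => q.2 i.succ)
      ↔ (Fin.tail q.1, Fin.tail q.2) ∈ SS m :=
    (mem_SS ((Fin.tail q.1, Fin.tail q.2) : (Fin m → Bool) × (Fin (m+1) → Bool))).symm
  exact or_congr h1 (and_congr Iff.rfl h2)


private def domEquiv (k : ℕ) :
    {q : (Fin k → Bool) × (Fin k → Bool) // ∀ i, q.1 i ≤ q.2 i} ≃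
      (Fin k → {p : Bool × Bool // p.1 ≤ p.2}) where
  toFun q i := ⟨(q.1.1 i, q.1.2 i), q.2 i⟩
  invFun f := ⟨(fun i => (f i).1.1, fun i => (f i).1.2), fun i => (f i).2⟩
  left_inv q := rfl
  right_inv f := rfl

private lemma ncard_dom (k : ℕ) :
    Set.ncard {q : (Fin k → Bool) × (Fin k → Bool) | ∀ i, q.1 i ≤ q.2 i} = 3 ^ k := by
  rw [← Nat.card_coe_set_eq, Set.coe_setOf]
  rw [Nat.card_congr (domEquiv k), Nat.card_eq_fintype_card, Fintype.card_fun]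
  have h3 : Fintype.card {p : Bool × Bool // p.1 ≤ p.2} = 3 := rfl
  simp [h3]

private def equivA (m : ℕ) :
    {q : (Fin (m + 1) → Bool) × (Fin (m + 2) → Bool) // ∀ i, q.1 i ≤ Fin.tail q.2 i} ≃
      Bool × {r : (Fin (m + 1) → Bool) × (Fin (m + 1) → Bool) // ∀ i, r.1 i ≤ r.2 i} where
  toFun q := (q.1.2 0, ⟨(q.1.1, Fin.tail q.1.2), q.2⟩)
  invFun x := ⟨(x.2.1.1, Fin.cons x.1 x.2.1.2), fun i => by
    rw [Fin.tail_cons]; exact x.2.2 i⟩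
  left_inv q := Subtype.ext (Prod.ext rfl (Fin.cons_self_tail q.1.2))
  right_inv x := by
    refine Prod.ext (by simp) (Subtype.ext (Prod.ext rfl ?_))
    simp [Fin.tail_cons]

private def equivB (m : ℕ) :
    {q : (Fin (m + 1) → Bool) × (Fin (m + 2) → Bool) //
        q.1 0 ≤ q.2 0 ∧ (Fin.tail q.1, Fin.tail q.2) ∈ SS m} ≃
      {p : Bool × Bool // p.1 ≤ p.2} ×
        {r : (Fin m → Bool) × (Fin (m + 1) → Bool) // r ∈ SS m} where
  toFun q := (⟨(q.1.1 0, q.1.2 0), q.2.1⟩, ⟨(Fin.tail q.1.1, Fin.tail q.1.2), q.2.2⟩)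
  invFun x := ⟨(Fin.cons x.1.1.1 x.2.1.1, Fin.cons x.1.1.2 x.2.1.2),
    by simp only [Fin.cons_zero]; exact x.1.2,
    by rw [Fin.tail_cons, Fin.tail_cons]; exact x.2.2⟩
  left_inv q := Subtype.ext (Prod.ext (Fin.cons_self_tail q.1.1) (Fin.cons_self_tail q.1.2))
  right_inv x := by
    refine Prod.ext (Subtype.ext ?_) (Subtype.ext ?_)
    · simp
    · refine Prod.ext ?_ ?_ <;> simp [Fin.tail_cons]

private def equivAB (m : ℕ) :
    {q : (Fin (m + 1) → Bool) × (Fin (m + 2) → Bool) //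
        (∀ i, q.1 i ≤ Fin.tail q.2 i) ∧ q.1 0 ≤ q.2 0} ≃
      {t : Bool × Bool × Bool // t.1 ≤ t.2.1 ∧ t.1 ≤ t.2.2} ×
        {r : (Fin m → Bool) × (Fin m → Bool) // ∀ i, r.1 i ≤ r.2 i} where
  toFun q := (⟨(q.1.1 0, Fin.tail q.1.2 0, q.1.2 0), q.2.1 0, q.2.2⟩,
    ⟨(Fin.tail q.1.1, Fin.tail (Fin.tail q.1.2)), fun i => q.2.1 i.succ⟩)
  invFun x := ⟨(Fin.cons x.1.1.1 x.2.1.1,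
      Fin.cons x.1.1.2.2 (Fin.cons x.1.1.2.1 x.2.1.2)),
    by
      constructor
      · intro i
        rw [Fin.tail_cons]
        refine Fin.cases ?_ ?_ i
        · simp only [Fin.cons_zero]; exact x.1.2.1
        · intro j; simp only [Fin.cons_succ]; exact x.2.2 j
      · simp only [Fin.cons_zero]; exact x.1.2.2⟩
  left_inv q := by
    refine Subtype.ext (Prod.ext (Fin.cons_self_tail q.1.1) ?_)
    simp [Fin.cons_self_tail]
  right_inv x := by
    refine Prod.ext (Subtype.ext ?_) (Subtype.ext ?_)
    · simp [Fin.tail_cons]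
    · refine Prod.ext ?_ ?_
      · simp [Fin.tail_cons]
      · funext i
        simp [Fin.tail_cons, Fin.cons_succ]


private lemma card_dom (k : ℕ) :
    Nat.card {q : (Fin k → Bool) × (Fin k → Bool) // ∀ i, q.1 i ≤ q.2 i} = 3 ^ k := by
  rw [Nat.card_congr (domEquiv k), Nat.card_eq_fintype_card, Fintype.card_fun]
  have h3 : Fintype.card {p : Bool × Bool // p.1 ≤ p.2} = 3 := rfl
  simp [h3]

private lemma card3 : Nat.card {p : Bool × Bool // p.1 ≤ p.2} = 3 := by
  rw [Nat.card_eq_fintype_card]; rfl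

private lemma card5 : Nat.card {t : Bool × Bool × Bool // t.1 ≤ t.2.1 ∧ t.1 ≤ t.2.2} = 5 := by
  rw [Nat.card_eq_fintype_card]; rfl

private lemma cardA (m : ℕ) :
    Set.ncard {q : (Fin (m + 1) → Bool) × (Fin (m + 2) → Bool) |
      ∀ i, q.1 i ≤ Fin.tail q.2 i} = 2 * 3 ^ (m + 1) := by
  rw [← Nat.card_coe_set_eq, Set.coe_setOf, Nat.card_congr (equivA m), Nat.card_prod,
    card_dom]
  simp [Nat.card_eq_fintype_card]

private lemma cardB (m : ℕ) :
    Set.ncard {q : (Fin (m + 1) → Bool) × (Fin (m + 2) → Bool) |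
      q.1 0 ≤ q.2 0 ∧ (Fin.tail q.1, Fin.tail q.2) ∈ SS m} = 3 * (SS m).ncard := by
  rw [← Nat.card_coe_set_eq, Set.coe_setOf, Nat.card_congr (equivB m), Nat.card_prod,
    card3, ← Nat.card_coe_set_eq]

private lemma cardAB (m : ℕ) :
    Set.ncard {q : (Fin (m + 1) → Bool) × (Fin (m + 2) → Bool) |
      (∀ i, q.1 i ≤ Fin.tail q.2 i) ∧ q.1 0 ≤ q.2 0} = 5 * 3 ^ m := by
  rw [← Nat.card_coe_set_eq, Set.coe_setOf, Nat.card_congr (equivAB m), Nat.card_prod,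
    card5, card_dom]

private lemma SS_succ_eq (m : ℕ) :
    SS (m + 1) = {q : (Fin (m + 1) → Bool) × (Fin (m + 2) → Bool) |
        ∀ i, q.1 i ≤ Fin.tail q.2 i} ∪
      {q | q.1 0 ≤ q.2 0 ∧ (Fin.tail q.1, Fin.tail q.2) ∈ SS m} := by
  ext q
  rw [Set.mem_union, Set.mem_setOf_eq, Set.mem_setOf_eq]
  exact mem_SS_succ q

private lemma inter_eq (m : ℕ) :
    ({q : (Fin (m + 1) → Bool) × (Fin (m + 2) → Bool) |
        ∀ i, q.1 i ≤ Fin.tail q.2 i} ∩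
      {q | q.1 0 ≤ q.2 0 ∧ (Fin.tail q.1, Fin.tail q.2) ∈ SS m}) =
      {q | (∀ i, q.1 i ≤ Fin.tail q.2 i) ∧ q.1 0 ≤ q.2 0} := by
  ext q
  simp only [Set.mem_inter_iff, Set.mem_setOf_eq]
  constructor
  · rintro ⟨hA, hB⟩; exact ⟨hA, hB.1⟩
  · rintro ⟨hA, hC⟩
    refine ⟨hA, hC, ⟨Fin.cons false (Fin.tail q.1), ?_, ?_⟩⟩
    · rw [List.ofFn_succ]
      simp only [Fin.cons_zero, Fin.cons_succ]
      exact List.sublist_cons_self _ _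
    · intro p
      refine Fin.cases ?_ ?_ p
      · simp only [Fin.cons_zero]; exact Bool.false_le _
      · intro i
        simp only [Fin.cons_succ]
        exact hA i.succ

private lemma SS_step (m : ℕ) : (SS (m + 1)).ncard = 3 * (SS m).ncard + 3 ^ m := by
  have hu := Set.ncard_union_add_ncard_inter
    {q : (Fin (m + 1) → Bool) × (Fin (m + 2) → Bool) | ∀ i, q.1 i ≤ Fin.tail q.2 i}
    {q | q.1 0 ≤ q.2 0 ∧ (Fin.tail q.1, Fin.tail q.2) ∈ SS m}
    (Set.toFinite _) (Set.toFinite _)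
  rw [← SS_succ_eq, inter_eq, cardA, cardB, cardAB] at hu
  have h3 : (3 : ℕ) ^ (m + 1) = 3 * 3 ^ m := by ring
  omega

private lemma SS_card : ∀ m : ℕ, (SS m).ncard = 2 * 3 ^ m + m * 3 ^ (m - 1) := by
  intro m
  induction m with
  | zero =>
    rw [SS_zero, Set.ncard_univ]
    simp [Nat.card_eq_fintype_card]
  | succ k ih =>
    rw [SS_step, ih]
    cases k with
    | zero => norm_num
    | succ j =>
      simp only [Nat.add_sub_cancel, pow_succ]
      ring

/-- The number of pairs `(y₀, s₁)` with `y₀ ∈ {0,1}^(n-1)`, `s₁ ∈ {0,1}^n` such that there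
exists a length-`n` supersequence `s₀` of `y₀` with `s₀ ≤ s₁` componentwise equals
`2·3^(n-1) + (n-1)·3^(n-2)`. -/
theorem stmt_6 (n : ℕ) (hn : 1 ≤ n) :
    {q : (Fin (n - 1) → Bool) × (Fin n → Bool) | ∃ s₀ : Fin n → Bool,
        (List.ofFn q.1).Sublist (List.ofFn s₀) ∧ ∀ p, s₀ p ≤ q.2 p}.ncard
      = 2 * 3 ^ (n - 1) + (n - 1) * 3 ^ (n - 2) := by
  obtain ⟨m, rfl⟩ : ∃ m, n = m + 1 := ⟨n - 1, (Nat.succ_pred_eq_of_pos hn).symm⟩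
  show (SS m).ncard = 2 * 3 ^ m + m * 3 ^ (m - 1)
  exact SS_card m
end

section
/- Let s be a sequence in {0,1,...,k}^n and let m be the number of positions where s equals k-1 or k. Then the composite error ball of radius (1,0,...,0) centered at s, consisting of all valid reconstructions obtainable by at most one substitution in the first channel, has size exactly 1 + m. -/
/-- Row `j` of the decomposition of a `k`-resolution composite binary sequence
`s ∈ {0,…,k}^n`: position `p` of row `j` is `1` iff `s p ≥ k - j`
(so letter `i` decomposes to the column `0^(k-i) 1^i`). -/
def decompRow (k n : ℕ) (s : Fin n → Fin (k + 1)) (j : Fin k) (p : Fin n) : Bool :=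
  decide (k - (j : ℕ) ≤ (s p : ℕ))

/-- A column `c : Fin k → Bool` is valid (reconstructible) iff it is nondecreasing,
i.e. of the form `0^(k-i) 1^i`. -/
def validCol (k : ℕ) (c : Fin k → Bool) : Prop :=
  ∀ j j' : Fin k, j ≤ j' → c j = true → c j' = true

/-- The letter reconstructed from a column: the number of ones in the column. -/
def reconAt (k : ℕ) (c : Fin k → Bool) : ℕ :=
  (Finset.univ.filter fun j => c j = true).card

/-- The composite error ball of radius `(e 0, …, e (k-1))` centered at `s`:
all valid reconstructions `y` of rows `r` where row `j` differs from the `j`-th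
decomposed row of `s` in at most `e j` positions. -/
def ballTuple (k n : ℕ) (e : Fin k → ℕ) (s : Fin n → Fin (k + 1)) :
    Set (Fin n → Fin (k + 1)) :=
  { y | ∃ r : Fin k → Fin n → Bool,
      (∀ j, hammingDist (r j) (decompRow k n s j) ≤ e j) ∧
      (∀ p, validCol k (fun j => r j p)) ∧
      (∀ p, (y p : ℕ) = reconAt k (fun j => r j p)) }

/-- The composite error ball of total radius `e` centered at `s`: all valid
reconstructions `y` of rows `r` differing from the decomposed rows of `s`
in at most `e` positions in total. -/
def ballTotal (k n : ℕ) (e : ℕ) (s : Fin n → Fin (k + 1)) :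
    Set (Fin n → Fin (k + 1)) :=
  { y | ∃ r : Fin k → Fin n → Bool,
      (∑ j, hammingDist (r j) (decompRow k n s j)) ≤ e ∧
      (∀ p, validCol k (fun j => r j p)) ∧
      (∀ p, (y p : ℕ) = reconAt k (fun j => r j p)) }

lemma auxCount (k v : ℕ) (hv : v ≤ k) :
    (Finset.univ.filter fun j : Fin k => k - (j:ℕ) ≤ v).card = v := by
  rw [Finset.card_filter, Fin.sum_univ_eq_sum_range fun i => if k - i ≤ v then 1 else 0,
    ← Finset.card_filter]
  rw [show (Finset.range k).filter (fun i => k - i ≤ v) = Finset.Ico (k - v) k by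
    ext i; simp [Finset.mem_Ico]; omega]
  rw [Nat.card_Ico]; omega

lemma auxRecon (k v : ℕ) (hv : v ≤ k) (c : Fin k → Bool)
    (h : ∀ j, c j = decide (k - (j:ℕ) ≤ v)) : reconAt k c = v := by
  unfold reconAt
  rw [show (Finset.univ.filter fun j => c j = true)
      = Finset.univ.filter (fun j : Fin k => k - (j:ℕ) ≤ v) by
    ext j; simp [h j]]
  exact auxCount k v hv

lemma auxReconFlipTop (k : ℕ) (hk : 0 < k) (c : Fin k → Bool)
    (h0 : ∀ j : Fin k, (j:ℕ) = 0 → c j = false)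
    (h1 : ∀ j : Fin k, (j:ℕ) ≠ 0 → c j = true) :
    reconAt k c = k - 1 := by
  unfold reconAt
  rw [show (Finset.univ.filter fun j => c j = true)
      = Finset.univ.filter (fun j : Fin k => k - (j:ℕ) ≤ k - 1) by
    ext j
    simp only [Finset.mem_filter, Finset.mem_univ, true_and]
    by_cases hj : (j:ℕ) = 0
    · simp [h0 j hj, hj]; omega
    · simp [h1 j hj]; omega]
  rw [auxCount k (k-1) (by omega)]

lemma auxReconAll (k : ℕ) (c : Fin k → Bool) (h : ∀ j, c j = true) : reconAt k c = k := by
  unfold reconAt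
  rw [Finset.filter_true_of_mem (fun j _ => h j), Finset.card_univ, Fintype.card_fin]


/-- For `s ∈ {0,…,k}^n` with `m` positions equal to `k-1` or `k`, the composite error
ball of radius `(1,0,…,0)` (at most one substitution in the first channel) centered
at `s` has size exactly `1 + m`. -/
theorem stmt_7 (k n : ℕ) (hk : 0 < k) (s : Fin n → Fin (k + 1)) :
    (ballTuple k n (fun j => if (j : ℕ) = 0 then 1 else 0) s).ncard
      = 1 + (Finset.univ.filter fun p =>
          (s p : ℕ) = k - 1 ∨ (s p : ℕ) = k).card := by
  classical
  set j0 : Fin k := ⟨0, hk⟩ with hj0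
  set m : Finset (Fin n) := Finset.univ.filter fun p =>
      (s p : ℕ) = k - 1 ∨ (s p : ℕ) = k with hm
  set f : Fin n → (Fin n → Fin (k+1)) := fun p => Function.update s p
      (if (s p : ℕ) = k then ⟨k-1, by omega⟩ else ⟨k, by omega⟩) with hf
  have hsle : ∀ p, (s p : ℕ) ≤ k := fun p => by omega
  have hfpp : ∀ p, ((f p p : ℕ) = if (s p : ℕ) = k then k - 1 else k) := by
    intro p
    simp only [hf, Function.update_self]
    split <;> rfl
  have hfne : ∀ p, (f p p : ℕ) ≠ (s p : ℕ) := by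
    intro p
    rw [hfpp p]
    split <;> omega
  have hfq : ∀ p q, q ≠ p → f p q = s q := by
    intro p q hq; simp [hf, Function.update_of_ne hq]
  have hs_mem : s ∈ ballTuple k n (fun j => if (j : ℕ) = 0 then 1 else 0) s := by
    refine ⟨decompRow k n s, fun j => by simp, fun p j j' hle hj => ?_, fun p => ?_⟩
    · dsimp only at hj ⊢
      rw [decompRow] at hj ⊢
      simp only [decide_eq_true_eq] at hj ⊢
      have := Fin.le_def.1 hle
      omega
    · exact (auxRecon k (s p) (hsle p) _ (fun j => rfl)).symm
  have hf_mem : ∀ p ∈ m, f p ∈ ballTuple k n (fun j => if (j : ℕ) = 0 then 1 else 0) s := by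
    intro p hp
    simp only [hm, Finset.mem_filter] at hp
    refine ⟨fun j => if (j:ℕ) = 0
        then Function.update (decompRow k n s j0) p (!(decompRow k n s j0 p))
        else decompRow k n s j, fun j => ?_, fun q => ?_, fun q => ?_⟩
    · by_cases hj : (j:ℕ) = 0
      · have hjj : j = j0 := Fin.ext hj
        subst hjj
        simp only [if_pos hj, hj, if_true]
        rw [hammingDist]
        rw [show (Finset.univ.filter fun q =>
            Function.update (decompRow k n s j0) p (!(decompRow k n s j0 p)) q
              ≠ decompRow k n s j0 q) = {p} by
          ext q
          by_cases hq : q = p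
          · subst hq; simp [Function.update_self]
          · simp [hq, Function.update_of_ne hq]]
        simp
      · simp [hj]
    · -- validity
      intro j j' hle hj
      dsimp only at hj ⊢
      by_cases hq : q = p
      · subst hq
        by_cases hj'0 : (j':ℕ) = 0
        · have hj00 : (j:ℕ) = 0 := by
            have := Fin.le_def.1 hle; omega
          have hje : j = j' := Fin.ext (by omega)
          rwa [← hje]
        · simp only [if_neg hj'0, decompRow, decide_eq_true_eq]
          rcases hp.2 with h | h <;>
            · have := Fin.le_def.1 hle
              have := j'.isLt
              omega
      · by_cases hj'0 : (j':ℕ) = 0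
        · have hjj : (j:ℕ) = 0 := by have := Fin.le_def.1 hle; omega
          have hje : j = j' := Fin.ext (by omega)
          rwa [← hje]
        · simp only [if_neg hj'0, decompRow, decide_eq_true_eq]
          by_cases hjz : (j:ℕ) = 0
          · rw [if_pos hjz, Function.update_of_ne hq, decompRow, hj0] at hj
            simp only [decide_eq_true_eq] at hj
            have := Fin.le_def.1 hle
            omega
          · rw [if_neg hjz, decompRow] at hj
            simp only [decide_eq_true_eq] at hj
            have := Fin.le_def.1 hle
            omega
    · -- recon values
      dsimp only
      by_cases hq : q = p
      · subst hq
        rw [hfpp q]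
        have hd0 : decompRow k n s j0 q = decide ((s q:ℕ) = k) := by
          rw [decompRow, hj0]
          simp only [Fin.val_mk, Nat.sub_zero]
          congr 1
          simp only [eq_iff_iff]
          omega
        by_cases hsq : (s q : ℕ) = k
        · rw [if_pos hsq]
          refine (auxReconFlipTop k hk _ (fun j hj => ?_) (fun j hj => ?_)).symm
          · have hje : j = j0 := Fin.ext hj
            subst hje
            simp only [if_pos hj, Function.update_self, hd0, hsq]
            simp
          · rw [if_neg hj, decompRow]
            simp only [decide_eq_true_eq]
            omega
        · rw [if_neg hsq]
          have hsq1 : (s q : ℕ) = k - 1 := by rcases hp.2 with h | h <;> omega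
          refine (auxReconAll k _ (fun j => ?_)).symm
          by_cases hj : (j:ℕ) = 0
          · have hje : j = j0 := Fin.ext hj
            subst hje
            simp only [if_pos hj, Function.update_self, hd0]
            simp [hsq]
          · rw [if_neg hj, decompRow]
            simp only [decide_eq_true_eq]
            have := j.isLt
            omega
      · rw [hfq p q (by exact hq)]
        refine (auxRecon k (↑(s q)) (hsle q) _ (fun j => ?_)).symm
        by_cases hj : (j:ℕ) = 0
        · have hje : j = j0 := Fin.ext hj
          subst hje
          rw [if_pos hj, Function.update_of_ne hq, decompRow, hj0]
        · rw [if_neg hj, decompRow]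
  have key : ballTuple k n (fun j => if (j : ℕ) = 0 then 1 else 0) s
      = ↑(insert s (m.image f)) := by
    ext y
    simp only [Finset.coe_insert, Set.mem_insert_iff, Finset.coe_image, Set.mem_image]
    constructor
    · rintro ⟨r, hr1, hr2, hr3⟩
      have hrj : ∀ j : Fin k, (j:ℕ) ≠ 0 → r j = decompRow k n s j := by
        intro j hj
        have h2 : hammingDist (r j) (decompRow k n s j) ≤ 0 := by simpa [hj] using hr1 j
        exact (hammingDist_eq_zero).1 (Nat.le_zero.1 h2)
      have h0 : ((Finset.univ.filter fun p => r j0 p ≠ decompRow k n s j0 p)).card ≤ 1 := by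
        have := hr1 j0
        simpa [hammingDist, hj0] using this
      by_cases hD : (Finset.univ.filter fun p => r j0 p ≠ decompRow k n s j0 p) = ∅
      · -- no flip : y = s
        left
        have hr0 : ∀ p, r j0 p = decompRow k n s j0 p := by
          intro p
          by_contra hc
          exact absurd (Finset.eq_empty_iff_forall_notMem.1 hD p)
            (by simp [hc])
        have hrall : ∀ j p, r j p = decompRow k n s j p := by
          intro j p
          by_cases hj : (j:ℕ) = 0
          · have : j = j0 := Fin.ext hj
            rw [this]; exact hr0 p
          · rw [hrj j hj]
        funext p
        have := hr3 p
        apply Fin.ext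
        rw [this]
        exact auxRecon k (s p) (hsle p) _ (fun j => by rw [hrall j p, decompRow])
      · -- one flip at p
        right
        obtain ⟨p, hDp⟩ := Finset.card_eq_one.1
          (le_antisymm h0 (Nat.one_le_iff_ne_zero.2 (by simpa [Finset.card_eq_zero] using hD)))
        have hmemD : ∀ q, r j0 q ≠ decompRow k n s j0 q ↔ q = p := by
          intro q
          rw [← Finset.mem_singleton, ← hDp, Finset.mem_filter]
          simp
        have hflip : r j0 p ≠ decompRow k n s j0 p := (hmemD p).2 rfl
        have hyq : ∀ q, q ≠ p → y q = s q := by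
          intro q hq
          have hr0q : r j0 q = decompRow k n s j0 q := by
            by_contra hc; exact hq ((hmemD q).1 hc)
          apply Fin.ext
          rw [hr3 q]
          refine auxRecon k (s q) (hsle q) _ (fun j => ?_)
          by_cases hj : (j:ℕ) = 0
          · have : j = j0 := Fin.ext hj
            rw [this, hr0q, decompRow, hj0]
          · rw [hrj j hj, decompRow]
        have hd0p : decompRow k n s j0 p = decide ((s p : ℕ) = k) := by
          rw [decompRow, hj0]
          simp only [Fin.val_mk, Nat.sub_zero]
          congr 1
          simp only [eq_iff_iff]
          omega
        by_cases hsp : (s p : ℕ) = k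
        · -- s p = k, flip to k-1
          refine ⟨p, by simp [hm, hsp], ?_⟩
          have hr0p : r j0 p = false := by
            rw [hd0p, hsp] at hflip
            simpa using hflip
          funext q
          by_cases hq : q = p
          · subst hq
            apply Fin.ext
            rw [hr3 q, hfpp q, if_pos hsp]
            refine (auxReconFlipTop k hk _ (fun j hj => ?_) (fun j hj => ?_)).symm
            · have : j = j0 := Fin.ext hj
              rw [this]; exact hr0p
            · rw [hrj j hj, decompRow]
              simp only [decide_eq_true_eq]
              omega
          · rw [hyq q hq, hfq p q hq]
        · -- s p ≠ k, so flip makes col 0 true; validity forces s p = k - 1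
          have hr0p : r j0 p = true := by
            rw [hd0p] at hflip
            simp [hsp] at hflip
            exact hflip
          have halltrue : ∀ j : Fin k, r j p = true := by
            intro j
            exact hr2 p j0 j (by simp [hj0, Fin.le_def]) hr0p
          have hsp1 : (s p : ℕ) = k - 1 := by
            by_cases hk1 : k = 1
            · omega
            · have hj1 : (⟨1, by omega⟩ : Fin k) ≠ j0 := by
                simp [hj0, Fin.ext_iff]
              have := halltrue ⟨1, by omega⟩
              rw [hrj ⟨1, by omega⟩ (by simp), decompRow] at this
              simp only [decide_eq_true_eq] at this
              omega
          refine ⟨p, by simp [hm, hsp1], ?_⟩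
          funext q
          by_cases hq : q = p
          · subst hq
            apply Fin.ext
            rw [hr3 q, hfpp q, if_neg hsp]
            exact (auxReconAll k _ halltrue).symm
          · rw [hyq q hq, hfq p q hq]
    · rintro (hy | ⟨p, hp, hfy⟩)
      · rw [hy]; exact hs_mem
      · rw [← hfy]; exact hf_mem p hp
  rw [key, Set.ncard_coe_finset]
  rw [Finset.card_insert_of_notMem, Finset.card_image_of_injOn, add_comm]
  · intro p _ p' _ hpp
    by_contra hne
    have : f p p' = s p' := hfq p p' (Ne.symm hne)
    rw [hpp] at this
    exact hfne p' (by rw [this])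
  · intro hmem
    obtain ⟨p, _, hfp⟩ := Finset.mem_image.1 hmem
    exact hfne p (by rw [hfp])
end

section
/- Let s be a sequence in {0,1,...,k}^n and let m be the number of positions where s takes a value in {1,...,k-1}. Then the composite error ball of radius 1 centered at s, consisting of all valid reconstructions obtainable by at most one substitution in any one of the k channels, has size exactly 1 + n + m. -/
section CompositeAux
open Finset


lemma cardFilterLe (k c : ℕ) :
    (Finset.univ.filter fun j : Fin k => c ≤ (j : ℕ)).card = k - c := by
  rw [Finset.card_filter, Fin.sum_univ_eq_sum_range (fun j => if c ≤ j then 1 else 0) k,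
      ← Finset.card_filter]
  have h : (Finset.range k).filter (fun j => c ≤ j) = Finset.Ico c k := by
    ext x; simp only [Finset.mem_filter, Finset.mem_range, Finset.mem_Ico]; omega
  rw [h, Nat.card_Ico]

lemma cardFilterStep (k a : ℕ) (ha : a ≤ k) :
    (Finset.univ.filter fun j : Fin k => k ≤ a + (j : ℕ)).card = a := by
  have h : (Finset.univ.filter fun j : Fin k => k ≤ a + (j : ℕ))
      = Finset.univ.filter fun j : Fin k => (k - a) ≤ (j : ℕ) :=
    Finset.filter_congr (by intro j _; constructor <;> (intro; omega))
  rw [h, cardFilterLe]; omega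

lemma cardFilterDiff_le (k a b : ℕ) (hab : a ≤ b) (hb : b ≤ k) :
    (Finset.univ.filter fun j : Fin k =>
        decide (k ≤ a + (j : ℕ)) ≠ decide (k ≤ b + (j : ℕ))).card = b - a := by
  have hset : (Finset.univ.filter fun j : Fin k =>
        decide (k ≤ a + (j : ℕ)) ≠ decide (k ≤ b + (j : ℕ)))
      = (Finset.univ.filter fun j : Fin k => k ≤ b + (j : ℕ))
          \ (Finset.univ.filter fun j : Fin k => k ≤ a + (j : ℕ)) := by
    ext j
    simp only [Finset.mem_filter, Finset.mem_sdiff, Finset.mem_univ, true_and, ne_eq,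
      decide_eq_decide]
    omega
  rw [hset, Finset.card_sdiff_of_subset, cardFilterStep k a (le_trans hab hb), cardFilterStep k b hb]
  intro j hj
  simp only [Finset.mem_filter, Finset.mem_univ, true_and] at hj ⊢
  omega

lemma cardFilterDiff (k a b : ℕ) (ha : a ≤ k) (hb : b ≤ k) :
    (Finset.univ.filter fun j : Fin k =>
        decide (k ≤ a + (j : ℕ)) ≠ decide (k ≤ b + (j : ℕ))).card = Nat.dist a b := by
  rcases le_total a b with h | h
  · rw [cardFilterDiff_le k a b h hb, Nat.dist]; omega
  · have := cardFilterDiff_le k b a h ha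
    have hc : (Finset.univ.filter fun j : Fin k =>
        decide (k ≤ a + (j : ℕ)) ≠ decide (k ≤ b + (j : ℕ)))
        = (Finset.univ.filter fun j : Fin k =>
        decide (k ≤ b + (j : ℕ)) ≠ decide (k ≤ a + (j : ℕ))) :=
      Finset.filter_congr (by intro j _; exact ne_comm)
    rw [hc, this, Nat.dist]; omega

lemma reconAt_le (k : ℕ) (c : Fin k → Bool) : reconAt k c ≤ k := by
  have := Finset.card_filter_le (Finset.univ : Finset (Fin k)) (fun j => c j = true)
  simpa [reconAt] using this

lemma valid_eq (k : ℕ) (c : Fin k → Bool) (hc : validCol k c) (j : Fin k) :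
    c j = decide (k ≤ reconAt k c + (j : ℕ)) := by
  have hjk := j.isLt
  cases hcj : c j with
  | true =>
    have hsub : (Finset.univ.filter fun j' : Fin k => (j : ℕ) ≤ (j' : ℕ))
        ⊆ Finset.univ.filter fun j' => c j' = true := by
      intro j' hj'
      simp only [Finset.mem_filter, Finset.mem_univ, true_and] at hj' ⊢
      exact hc j j' hj' hcj
    have h1 := Finset.card_le_card hsub
    rw [cardFilterLe] at h1
    symm
    simp only [decide_eq_true_eq]
    have : reconAt k c = (Finset.univ.filter fun j' => c j' = true).card := rfl
    omega
  | false =>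
    have hsub : (Finset.univ.filter fun j' : Fin k => c j' = true)
        ⊆ Finset.univ.filter fun j' : Fin k => (j : ℕ) + 1 ≤ (j' : ℕ) := by
      intro j' hj'
      simp only [Finset.mem_filter, Finset.mem_univ, true_and] at hj' ⊢
      by_contra h
      push_neg at h
      have hle : j' ≤ j := by omega
      have := hc j' j hle hj'
      rw [hcj] at this
      exact absurd this (by simp)
    have h1 := Finset.card_le_card hsub
    rw [cardFilterLe] at h1
    symm
    simp only [decide_eq_false_iff_not, not_le]
    have : reconAt k c = (Finset.univ.filter fun j' => c j' = true).card := rfl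
    omega

lemma reconAt_step (k a : ℕ) (ha : a ≤ k) :
    reconAt k (fun j => decide (k ≤ a + (j : ℕ))) = a := by
  unfold reconAt
  have h : (Finset.univ.filter fun j : Fin k => decide (k ≤ a + (j : ℕ)) = true)
      = Finset.univ.filter fun j : Fin k => k ≤ a + (j : ℕ) := by
    simp
  rw [h, cardFilterStep k a ha]

lemma decompRow_eq (k n : ℕ) (z : Fin n → Fin (k + 1)) (j : Fin k) (p : Fin n) :
    decompRow k n z j p = decide (k ≤ (z p : ℕ) + (j : ℕ)) := by
  unfold decompRow
  rw [decide_eq_decide]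
  omega

lemma sum_hamming (k n : ℕ) (y s : Fin n → Fin (k + 1)) :
    ∑ j : Fin k, hammingDist (fun p => decide (k ≤ (y p : ℕ) + (j : ℕ)))
        (decompRow k n s j) = ∑ p, Nat.dist (y p : ℕ) (s p : ℕ) := by
  have hh : ∀ j : Fin k, hammingDist (fun p => decide (k ≤ (y p : ℕ) + (j : ℕ)))
      (decompRow k n s j)
      = (Finset.univ.filter fun p : Fin n =>
          decide (k ≤ (y p : ℕ) + (j : ℕ)) ≠ decide (k ≤ (s p : ℕ) + (j : ℕ))).card := by
    intro j
    show (Finset.univ.filter _).card = _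
    congr 1
    apply Finset.filter_congr
    intro p _
    rw [decompRow_eq]
  calc ∑ j : Fin k, hammingDist (fun p => decide (k ≤ (y p : ℕ) + (j : ℕ))) (decompRow k n s j)
      = ∑ j : Fin k, ∑ p : Fin n,
          if decide (k ≤ (y p : ℕ) + (j : ℕ)) ≠ decide (k ≤ (s p : ℕ) + (j : ℕ)) then 1 else 0 := by
        simp only [hh, Finset.card_filter]
    _ = ∑ p : Fin n, ∑ j : Fin k,
          if decide (k ≤ (y p : ℕ) + (j : ℕ)) ≠ decide (k ≤ (s p : ℕ) + (j : ℕ)) then 1 else 0 :=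
        Finset.sum_comm
    _ = ∑ p, Nat.dist (y p : ℕ) (s p : ℕ) := by
        apply Finset.sum_congr rfl
        intro p _
        rw [← Finset.card_filter]
        exact cardFilterDiff k (y p) (s p) (by omega) (by omega)

lemma ball_char (k n : ℕ) (s : Fin n → Fin (k + 1)) :
    ballTotal k n 1 s = { y | ∑ p, Nat.dist (y p : ℕ) (s p : ℕ) ≤ 1 } := by
  ext y
  simp only [ballTotal, Set.mem_setOf_eq]
  constructor
  · rintro ⟨r, hsum, hval, hrec⟩
    have hr : ∀ j p, r j p = decide (k ≤ (y p : ℕ) + (j : ℕ)) := by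
      intro j p
      rw [valid_eq k (fun j => r j p) (hval p) j, ← hrec p]
    rw [← sum_hamming k n y s]
    calc ∑ j : Fin k, hammingDist (fun p => decide (k ≤ (y p : ℕ) + (j : ℕ))) (decompRow k n s j)
        = ∑ j, hammingDist (r j) (decompRow k n s j) := by
          apply Finset.sum_congr rfl
          intro j _
          congr 1
          funext p
          exact (hr j p).symm
      _ ≤ 1 := hsum
  · intro h
    refine ⟨fun j p => decide (k ≤ (y p : ℕ) + (j : ℕ)), ?_, ?_, ?_⟩
    · rw [sum_hamming k n y s]; exact h
    · intro p j j' hjj' hj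
      simp only [decide_eq_true_eq] at hj ⊢
      have : (j : ℕ) ≤ (j' : ℕ) := hjj'
      omega
    · intro p
      rw [reconAt_step k (y p) (by omega)]


lemma card_nb (k : ℕ) (hk : 0 < k) (a : Fin (k + 1)) :
    (Finset.univ.filter fun v : Fin (k + 1) => Nat.dist (v : ℕ) (a : ℕ) = 1).card
      = if (a : ℕ) ≠ 0 ∧ (a : ℕ) ≠ k then 2 else 1 := by
  have hak := a.isLt
  by_cases h1 : (a : ℕ) = 0
  · have hset : (Finset.univ.filter fun v : Fin (k + 1) => Nat.dist (v : ℕ) (a : ℕ) = 1)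
        = {(⟨1, by omega⟩ : Fin (k + 1))} := by
      ext v
      have hv := v.isLt
      rw [Finset.mem_filter]
      simp only [Finset.mem_filter, Finset.mem_univ, true_and, Finset.mem_singleton,
        Fin.ext_iff, Nat.dist, Finset.mem_filter_univ]
      omega
    rw [hset]
    simp [h1]
  · by_cases h2 : (a : ℕ) = k
    · have hset : (Finset.univ.filter fun v : Fin (k + 1) => Nat.dist (v : ℕ) (a : ℕ) = 1)
          = {(⟨k - 1, by omega⟩ : Fin (k + 1))} := by
        ext v
        have hv := v.isLt
        rw [Finset.mem_filter]
        simp only [Finset.mem_filter, Finset.mem_univ, true_and, Finset.mem_singleton,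
          Fin.ext_iff, Nat.dist, Finset.mem_filter_univ]
        omega
      rw [hset]
      simp [h2]
    · have hset : (Finset.univ.filter fun v : Fin (k + 1) => Nat.dist (v : ℕ) (a : ℕ) = 1)
          = {(⟨(a : ℕ) - 1, by omega⟩ : Fin (k + 1)), (⟨(a : ℕ) + 1, by omega⟩ : Fin (k + 1))} := by
        ext v
        have hv := v.isLt
        rw [Finset.mem_filter]
        simp only [Finset.mem_filter, Finset.mem_univ, true_and, Finset.mem_insert,
          Finset.mem_singleton, Fin.ext_iff, Nat.dist, Finset.mem_filter_univ]
        omega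
      rw [hset, Finset.card_insert_of_notMem
        (by simp only [Finset.mem_singleton, Fin.ext_iff]; omega)]
      simp [h1, h2]

theorem count_part (k n : ℕ) (hk : 0 < k) (s : Fin n → Fin (k + 1)) :
    ({ y : Fin n → Fin (k + 1) | ∑ p, Nat.dist (y p : ℕ) (s p : ℕ) ≤ 1 }).ncard
      = 1 + n + (Finset.univ.filter fun p =>
          (s p : ℕ) ≠ 0 ∧ (s p : ℕ) ≠ k).card := by
  classical
  have hcoe : ({ y : Fin n → Fin (k + 1) | ∑ p, Nat.dist (y p : ℕ) (s p : ℕ) ≤ 1 })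
      = ↑(Finset.univ.filter fun y : Fin n → Fin (k + 1) =>
          ∑ p, Nat.dist (y p : ℕ) (s p : ℕ) ≤ 1) := by
    ext y; simp
  rw [hcoe, Set.ncard_coe_finset]
  set T : Finset (Fin n → Fin (k + 1)) := insert s
      (Finset.univ.biUnion fun p =>
        (Finset.univ.filter fun v : Fin (k + 1) => Nat.dist (v : ℕ) (s p : ℕ) = 1).image
          (Function.update s p)) with hT
  have hTeq : (Finset.univ.filter fun y : Fin n → Fin (k + 1) =>
      ∑ p, Nat.dist (y p : ℕ) (s p : ℕ) ≤ 1) = T := by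
    ext y
    simp only [hT, Finset.mem_filter, Finset.mem_univ, true_and, Finset.mem_insert,
      Finset.mem_biUnion, Finset.mem_image]
    constructor
    · intro h
      by_cases hy : y = s
      · left; exact hy
      · right
        obtain ⟨p, hp⟩ : ∃ p, y p ≠ s p := by
          by_contra hc; push_neg at hc; exact hy (funext hc)
        have hvne : (y p : ℕ) ≠ (s p : ℕ) := fun hh => hp (Fin.ext hh)
        have hdp : 1 ≤ Nat.dist (y p : ℕ) (s p : ℕ) := by
          unfold Nat.dist; omega
        have hle : Nat.dist (y p : ℕ) (s p : ℕ) ≤ ∑ q, Nat.dist (y q : ℕ) (s q : ℕ) :=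
          Finset.single_le_sum (f := fun q => Nat.dist (y q : ℕ) (s q : ℕ))
            (fun q _ => Nat.zero_le _) (Finset.mem_univ p)
        have hq0 : ∀ q, q ≠ p → (y q : ℕ) = (s q : ℕ) := by
          intro q hq
          by_contra hc
          have hdq : 1 ≤ Nat.dist (y q : ℕ) (s q : ℕ) := by unfold Nat.dist; omega
          have hqe : q ∈ Finset.univ.erase p := by simp [hq]
          have h2 : Nat.dist (y q : ℕ) (s q : ℕ)
              ≤ ∑ x ∈ Finset.univ.erase p, Nat.dist (y x : ℕ) (s x : ℕ) :=
            Finset.single_le_sum (f := fun x => Nat.dist (y x : ℕ) (s x : ℕ))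
              (fun x _ => Nat.zero_le _) hqe
          have h3 : Nat.dist (y p : ℕ) (s p : ℕ)
                + ∑ x ∈ Finset.univ.erase p, Nat.dist (y x : ℕ) (s x : ℕ)
              = ∑ x : Fin n, Nat.dist (y x : ℕ) (s x : ℕ) :=
            Finset.add_sum_erase Finset.univ
              (fun x => Nat.dist (y x : ℕ) (s x : ℕ)) (Finset.mem_univ p)
          omega
        refine ⟨p, y p, ?_, ?_⟩
        · omega
        · funext q
          by_cases hq : q = p
          · subst hq; rw [Function.update_self]
          · rw [Function.update_of_ne hq]
            exact Fin.ext (hq0 q hq).symm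
    · rintro (rfl | ⟨p, v, hv, rfl⟩)
      · simp [Nat.dist_self]
      · have hsum : ∑ q, Nat.dist ((Function.update s p v q : ℕ)) (s q : ℕ)
            = Nat.dist (v : ℕ) (s p : ℕ) := by
          rw [Fintype.sum_eq_single p]
          · simp
          · intro q hq
            rw [Function.update_of_ne hq, Nat.dist_self]
        rw [hsum, hv]
  rw [hTeq, hT]
  have hs_not : s ∉ Finset.univ.biUnion fun p =>
      (Finset.univ.filter fun v : Fin (k + 1) => Nat.dist (v : ℕ) (s p : ℕ) = 1).image
        (Function.update s p) := by
    simp only [Finset.mem_biUnion, Finset.mem_image, Finset.mem_filter, Finset.mem_univ,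
      true_and, not_exists]
    rintro p v ⟨hv, heq⟩
    have : Function.update s p v p = s p := by rw [heq]
    rw [Function.update_self] at this
    rw [this, Nat.dist_self] at hv
    exact one_ne_zero hv.symm
  have hdisj : ∀ p ∈ (Finset.univ : Finset (Fin n)), ∀ q ∈ (Finset.univ : Finset (Fin n)),
      p ≠ q → Disjoint
        ((Finset.univ.filter fun v : Fin (k + 1) => Nat.dist (v : ℕ) (s p : ℕ) = 1).image
          (Function.update s p))
        ((Finset.univ.filter fun v : Fin (k + 1) => Nat.dist (v : ℕ) (s q : ℕ) = 1).image
          (Function.update s q)) := by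
    intro p _ q _ hpq
    simp only [Finset.disjoint_left, Finset.mem_image, Finset.mem_filter,
      Finset.mem_univ, true_and, not_exists]
    rintro y ⟨v, hv, rfl⟩ w ⟨hw, heq⟩
    have h2 := congrFun heq q
    rw [Function.update_self, Function.update_of_ne (Ne.symm hpq)] at h2
    rw [h2, Nat.dist_self] at hw
    exact one_ne_zero hw.symm
  rw [Finset.card_insert_of_notMem hs_not, Finset.card_biUnion hdisj]
  have himg : ∀ p : Fin n,
      ((Finset.univ.filter fun v : Fin (k + 1) => Nat.dist (v : ℕ) (s p : ℕ) = 1).image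
        (Function.update s p)).card
      = if (s p : ℕ) ≠ 0 ∧ (s p : ℕ) ≠ k then 2 else 1 := by
    intro p
    rw [Finset.card_image_of_injective _ (by
      intro v w hvw
      have := congrFun hvw p
      simpa using this),
      card_nb k hk (s p)]
  rw [Finset.sum_congr rfl (fun p _ => himg p)]
  have hsum2 : ∑ p : Fin n, (if (s p : ℕ) ≠ 0 ∧ (s p : ℕ) ≠ k then 2 else 1)
      = n + (Finset.univ.filter fun p => (s p : ℕ) ≠ 0 ∧ (s p : ℕ) ≠ k).card := by
    rw [Finset.card_filter]
    have heach : ∀ p : Fin n, (if (s p : ℕ) ≠ 0 ∧ (s p : ℕ) ≠ k then 2 else 1)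
        = 1 + (if (s p : ℕ) ≠ 0 ∧ (s p : ℕ) ≠ k then 1 else 0) := by
      intro p; split <;> rfl
    rw [Finset.sum_congr rfl (fun p _ => heach p), Finset.sum_add_distrib]
    simp
  omega

end CompositeAux

/-- For `s ∈ {0,…,k}^n` with `m` positions taking a value in `{1,…,k-1}`, the composite
error ball of radius `1` (at most one substitution in any one of the `k` channels)
centered at `s` has size exactly `1 + n + m`. -/

theorem stmt_8 (k n : ℕ) (hk : 0 < k) (s : Fin n → Fin (k + 1)) :
    (ballTotal k n 1 s).ncard
      = 1 + n + (Finset.univ.filter fun p =>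
          (s p : ℕ) ≠ 0 ∧ (s p : ℕ) ≠ k).card := by
  rw [ball_char k n s]
  exact count_part k n hk s
end

section
/- Let s ∈ {0,1,2}^n have j zeros and m ones. Then the composite error ball of radius (1,1) centered at s has size 2n + 1 + m(n-1) + j(n-m-j). -/
namespace Stmt9Aux

def colOf (i : Fin 3) : Fin 2 → Bool := fun j => decide (2 - (j : ℕ) ≤ (i : ℕ))

lemma decompRow_eq_colOf (n : ℕ) (s : Fin n → Fin 3) (j : Fin 2) (p : Fin n) :
    decompRow 2 n s j p = colOf (s p) j := rfl

lemma reconAt_two (c : Fin 2 → Bool) :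
    reconAt 2 c = (if c 0 then 1 else 0) + (if c 1 then 1 else 0) := by
  rw [reconAt, Finset.card_filter, Fin.sum_univ_two]

lemma validCol_colOf : ∀ i : Fin 3, validCol 2 (colOf i) := by unfold validCol; decide

lemma reconAt_colOf : ∀ i : Fin 3, reconAt 2 (colOf i) = (i : ℕ) := by decide

lemma classify : ∀ (a b : Bool) (sp yp : Fin 3), (a = true → b = true) →
    ((yp : ℕ) = (if a then 1 else 0) + (if b then 1 else 0)) →
    ((a = colOf sp 0 → b = colOf sp 1 → yp = sp) ∧
     (a ≠ colOf sp 0 → b = colOf sp 1 → (sp : ℕ) + (yp : ℕ) = 3) ∧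
     (a = colOf sp 0 → b ≠ colOf sp 1 → (sp : ℕ) + (yp : ℕ) = 1) ∧
     ((¬ (a = colOf sp 0 ∧ b = colOf sp 1)) → yp ≠ sp)) := by decide

lemma hd_le_one {n : ℕ} (f g : Fin n → Bool) (p : Fin n) (h : ∀ q, q ≠ p → f q = g q) :
    hammingDist f g ≤ 1 := by
  have hsub : (Finset.univ.filter fun q => f q ≠ g q) ⊆ {p} := by
    intro q hq
    simp only [Finset.mem_filter, Finset.mem_univ, true_and] at hq
    simp only [Finset.mem_singleton]
    by_contra hne
    exact hq (h q hne)
  have := Finset.card_le_card hsub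
  simpa [hammingDist] using this

lemma hd_card {n : ℕ} (f g : Fin n → Bool) :
    hammingDist f g = (Finset.univ.filter fun q => f q ≠ g q).card := rfl

def Pred (n : ℕ) (s y : Fin n → Fin 3) : Prop :=
  y = s ∨ (∃ p, y p ≠ s p ∧ ∀ q, q ≠ p → y q = s q) ∨
    (∃ p q, p ≠ q ∧ (s p : ℕ) + (y p : ℕ) = 3 ∧ (s q : ℕ) + (y q : ℕ) = 1 ∧
      ∀ t, t ≠ p → t ≠ q → y t = s t)

lemma ball_eq (n : ℕ) (s : Fin n → Fin 3) :
    ballTuple 2 n (fun _ => 1) s = { y | Pred n s y } := by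
  ext y
  simp only [ballTuple, Set.mem_setOf_eq]
  constructor
  · rintro ⟨r, hdist, hval, hy⟩
    -- classification facts at each point
    have cl : ∀ p, ((r 0 p = colOf (s p) 0 → r 1 p = colOf (s p) 1 → y p = s p) ∧
        (r 0 p ≠ colOf (s p) 0 → r 1 p = colOf (s p) 1 → (s p : ℕ) + (y p : ℕ) = 3) ∧
        (r 0 p = colOf (s p) 0 → r 1 p ≠ colOf (s p) 1 → (s p : ℕ) + (y p : ℕ) = 1) ∧
        ((¬ (r 0 p = colOf (s p) 0 ∧ r 1 p = colOf (s p) 1)) → y p ≠ s p)) := by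
      intro p
      refine classify (r 0 p) (r 1 p) (s p) (y p) (hval p 0 1 (by decide)) ?_
      rw [hy p, reconAt_two]
    have h0 : ∀ p p', r 0 p ≠ colOf (s p) 0 → r 0 p' ≠ colOf (s p') 0 → p = p' := by
      intro p p' hp hp'
      have hc := hdist 0
      rw [hd_card] at hc
      have := Finset.card_le_one.mp hc p (Finset.mem_filter.mpr ⟨Finset.mem_univ _, hp⟩)
        p' (Finset.mem_filter.mpr ⟨Finset.mem_univ _, hp'⟩)
      exact this
    have h1 : ∀ p p', r 1 p ≠ colOf (s p) 1 → r 1 p' ≠ colOf (s p') 1 → p = p' := by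
      intro p p' hp hp'
      have hc := hdist 1
      rw [hd_card] at hc
      exact Finset.card_le_one.mp hc p (Finset.mem_filter.mpr ⟨Finset.mem_univ _, hp⟩)
        p' (Finset.mem_filter.mpr ⟨Finset.mem_univ _, hp'⟩)
    by_cases hcase : ∀ p, y p = s p
    · exact Or.inl (funext hcase)
    push_neg at hcase
    obtain ⟨p, hp⟩ := hcase
    by_cases hcase2 : ∀ q, q ≠ p → y q = s q
    · exact Or.inr (Or.inl ⟨p, hp, hcase2⟩)
    push_neg at hcase2
    obtain ⟨q, hqp, hq⟩ := hcase2
    -- p and q both differ; show they come from distinct rows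
    have hdiff : ∀ t, y t ≠ s t → (r 0 t ≠ colOf (s t) 0 ∨ r 1 t ≠ colOf (s t) 1) := by
      intro t ht
      by_contra hcon
      push_neg at hcon
      exact ht ((cl t).1 hcon.1 hcon.2)
    rcases hdiff p hp with hp0 | hp1
    · -- p is a row-0 flip
      have hq1 : r 1 q ≠ colOf (s q) 1 := by
        rcases hdiff q hq with hq0 | hq1
        · exact absurd (h0 q p hq0 hp0) hqp
        · exact hq1
      have hp1' : r 1 p = colOf (s p) 1 := by
        by_contra hcon
        exact hqp (h1 q p hq1 hcon)
      have hq0' : r 0 q = colOf (s q) 0 := by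
        by_contra hcon
        exact hqp (h0 q p hcon hp0)
      refine Or.inr (Or.inr ⟨p, q, (fun h => hqp h.symm), (cl p).2.1 hp0 hp1',
        (cl q).2.2.1 hq0' hq1, ?_⟩)
      intro t htp htq
      by_contra hcon
      rcases hdiff t hcon with ht0 | ht1
      · exact htp (h0 t p ht0 hp0)
      · exact htq (h1 t q ht1 hq1)
    · -- p is a row-1 flip
      have hq0 : r 0 q ≠ colOf (s q) 0 := by
        rcases hdiff q hq with hq0 | hq1
        · exact hq0
        · exact absurd (h1 q p hq1 hp1) hqp
      have hq1' : r 1 q = colOf (s q) 1 := by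
        by_contra hcon
        exact hqp (h1 q p hcon hp1)
      have hp0' : r 0 p = colOf (s p) 0 := by
        by_contra hcon
        exact hqp (h0 p q hcon hq0).symm
      exact Or.inr (Or.inr ⟨q, p, hqp, (cl q).2.1 hq0 hq1',
        (cl p).2.2.1 hp0' hp1, fun t htq htp => by
          by_contra hcon
          rcases hdiff t hcon with ht0 | ht1
          · exact htq (h0 t q ht0 hq0)
          · exact htp (h1 t p ht1 hp1)⟩)
  · -- Pred → ball : use r := fun j p => colOf (y p) j
    intro hpred
    refine ⟨fun jj p => colOf (y p) jj, ?_, fun p => validCol_colOf (y p),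
      fun p => (reconAt_colOf (y p)).symm⟩
    intro jj
    show hammingDist (fun p => colOf (y p) jj) (decompRow 2 n s jj) ≤ 1
    rcases hpred with rfl | ⟨p, _, hrest⟩ | ⟨p, q, hpq, hsp, hsq, hrest⟩
    · have : (fun p => colOf (y p) jj) = decompRow 2 n y jj := rfl
      rw [this, hammingDist_self]; exact Nat.zero_le 1
    · apply hd_le_one _ _ p
      intro t htp
      rw [decompRow_eq_colOf, hrest t htp]
    · -- row 0 differs only at p, row 1 only at q
      fin_cases jj
      · apply hd_le_one _ _ p
        intro t htp
        rw [decompRow_eq_colOf]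
        by_cases htq : t = q
        · subst htq
          simp only [colOf, Fin.val_zero]
          exact decide_eq_decide.mpr (by omega)
        · rw [hrest t htp htq]
      · apply hd_le_one _ _ q
        intro t htq
        rw [decompRow_eq_colOf]
        by_cases htp : t = p
        · subst htp
          have h1 := (s t).isLt
          have h2 := (y t).isLt
          simp only [colOf, Fin.val_one]
          exact decide_eq_decide.mpr (by omega)
        · rw [hrest t htp htq]

def flipA (i : Fin 3) : Fin 3 := if (i : ℕ) = 1 then 2 else 1
def flipB (i : Fin 3) : Fin 3 := if (i : ℕ) = 0 then 1 else 0

lemma flipA_sum : ∀ i : Fin 3, 1 ≤ (i : ℕ) → (i : ℕ) + (flipA i : ℕ) = 3 := by decide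
lemma flipB_sum : ∀ i : Fin 3, (i : ℕ) ≤ 1 → (i : ℕ) + (flipB i : ℕ) = 1 := by decide
lemma flipA_ne : ∀ i : Fin 3, 1 ≤ (i : ℕ) → flipA i ≠ i := by decide
lemma flipB_ne : ∀ i : Fin 3, (i : ℕ) ≤ 1 → flipB i ≠ i := by decide
lemma flipA_char : ∀ i v : Fin 3, (i : ℕ) + (v : ℕ) = 3 → 1 ≤ (i : ℕ) ∧ v = flipA i := by decide
lemma flipB_char : ∀ i v : Fin 3, (i : ℕ) + (v : ℕ) = 1 → (i : ℕ) ≤ 1 ∧ v = flipB i := by decide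

variable (n : ℕ) (s : Fin n → Fin 3)

def f1 (pv : Fin n × Fin 3) : Fin n → Fin 3 := Function.update s pv.1 pv.2

def f2 (pq : Fin n × Fin n) : Fin n → Fin 3 :=
  Function.update (Function.update s pq.1 (flipA (s pq.1))) pq.2 (flipB (s pq.2))

def T1 : Finset (Fin n × Fin 3) := Finset.univ.filter fun pv => pv.2 ≠ s pv.1

def setA : Finset (Fin n) := Finset.univ.filter fun p => 1 ≤ (s p : ℕ)
def setB : Finset (Fin n) := Finset.univ.filter fun p => (s p : ℕ) ≤ 1

def T2 : Finset (Fin n × Fin n) := (setA n s ×ˢ setB n s).filter fun pq => pq.1 ≠ pq.2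

def ballF : Finset (Fin n → Fin 3) :=
  ({s} ∪ (T1 n s).image (f1 n s)) ∪ (T2 n s).image (f2 n s)

-- evaluation lemmas for f2
lemma f2_eval_q (pq : Fin n × Fin n) : f2 n s pq pq.2 = flipB (s pq.2) :=
  Function.update_self _ _ _

lemma f2_eval_p (pq : Fin n × Fin n) (h : pq.1 ≠ pq.2) : f2 n s pq pq.1 = flipA (s pq.1) := by
  rw [f2, Function.update_of_ne h, Function.update_self]

lemma f2_eval_other (pq : Fin n × Fin n) (t : Fin n) (h1 : t ≠ pq.1) (h2 : t ≠ pq.2) :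
    f2 n s pq t = s t := by
  rw [f2, Function.update_of_ne h2, Function.update_of_ne h1]

lemma mem_ballF_iff (y : Fin n → Fin 3) : y ∈ ballF n s ↔ Pred n s y := by
  constructor
  · intro hy
    simp only [ballF, Finset.mem_union, Finset.mem_singleton, Finset.mem_image] at hy
    rcases hy with (rfl | ⟨pv, hpv, rfl⟩) | ⟨pq, hpq, rfl⟩
    · exact Or.inl rfl
    · refine Or.inr (Or.inl ⟨pv.1, ?_, ?_⟩)
      · rw [f1, Function.update_self]
        exact (Finset.mem_filter.mp hpv).2
      · intro q hq
        exact Function.update_of_ne hq _ _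
    · simp only [T2, setA, setB, Finset.mem_filter, Finset.mem_product, Finset.mem_univ,
        true_and] at hpq
      obtain ⟨⟨ha, hb⟩, hne⟩ := hpq
      refine Or.inr (Or.inr ⟨pq.1, pq.2, hne, ?_, ?_, ?_⟩)
      · rw [f2_eval_p n s pq hne]
        exact flipA_sum _ ha
      · rw [f2_eval_q]
        exact flipB_sum _ hb
      · exact fun t h1 h2 => f2_eval_other n s pq t h1 h2
  · intro hy
    simp only [ballF, Finset.mem_union, Finset.mem_singleton, Finset.mem_image]
    rcases hy with rfl | ⟨p, hp, hrest⟩ | ⟨p, q, hpq, hsp, hsq, hrest⟩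
    · exact Or.inl (Or.inl rfl)
    · refine Or.inl (Or.inr ⟨(p, y p), ?_, ?_⟩)
      · exact Finset.mem_filter.mpr ⟨Finset.mem_univ _, hp⟩
      · funext t
        by_cases ht : t = p
        · subst ht; rw [f1, Function.update_self]
        · rw [f1, Function.update_of_ne ht, hrest t ht]
    · obtain ⟨hap, hyp⟩ := flipA_char _ _ hsp
      obtain ⟨hbq, hyq⟩ := flipB_char _ _ hsq
      refine Or.inr ⟨(p, q), ?_, ?_⟩
      · refine Finset.mem_filter.mpr ⟨Finset.mem_product.mpr ⟨?_, ?_⟩, hpq⟩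
        · exact Finset.mem_filter.mpr ⟨Finset.mem_univ _, hap⟩
        · exact Finset.mem_filter.mpr ⟨Finset.mem_univ _, hbq⟩
      · funext t
        by_cases h2 : t = q
        · subst h2; rw [f2_eval_q]; exact hyq.symm
        by_cases h1 : t = p
        · subst h1; rw [f2_eval_p n s _ hpq]; exact hyp.symm
        · rw [f2_eval_other n s _ t h1 h2, hrest t h1 h2]

variable (n : ℕ) (s : Fin n → Fin 3)

lemma card_T1 : (T1 n s).card = 2 * n := by
  have h1 : (Finset.univ.filter fun pv : Fin n × Fin 3 => pv.2 = s pv.1)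
      = Finset.univ.image (fun p => (p, s p)) := by
    ext ⟨p, v⟩
    simp only [Finset.mem_filter, Finset.mem_univ, true_and, Finset.mem_image, Prod.ext_iff]
    constructor
    · rintro rfl; exact ⟨p, rfl, rfl⟩
    · rintro ⟨a, rfl, rfl⟩; rfl
  have h2 := Finset.card_filter_add_card_filter_not
    (s := (Finset.univ : Finset (Fin n × Fin 3))) (p := fun pv => pv.2 = s pv.1)
  rw [h1] at h2
  have h3 : (Finset.univ.image (fun p : Fin n => (p, s p))).card = n := by
    rw [Finset.card_image_of_injective _ (fun a b h => congrArg Prod.fst h)]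
    simp
  have h4 : (Finset.univ : Finset (Fin n × Fin 3)).card = n * 3 := by simp
  have h5 : (T1 n s).card
      = (Finset.univ.filter fun pv : Fin n × Fin 3 => ¬ pv.2 = s pv.1).card := rfl
  omega

lemma injOn_f1 : Set.InjOn (f1 n s) (T1 n s) := by
  rintro ⟨p, v⟩ h1 ⟨p', v'⟩ h2 heq
  simp only [Finset.coe_filter, T1, Set.mem_setOf_eq, Finset.mem_univ, true_and] at h1 h2
  by_cases hpp : p = p'
  · subst hpp
    have := congrFun heq p
    rw [f1, f1, Function.update_self, Function.update_self] at this
    have hv : v = v' := this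
    rw [hv]
  · exfalso
    have := congrFun heq p
    rw [f1, f1, Function.update_self, Function.update_of_ne hpp] at this
    exact h1 this

lemma card_T2 :
    (T2 n s).card = (setA n s).card * (setB n s).card - (setA n s ∩ setB n s).card := by
  have h2 := Finset.card_filter_add_card_filter_not
    (s := setA n s ×ˢ setB n s) (p := fun pq => pq.1 ≠ pq.2)
  have h1 : ((setA n s ×ˢ setB n s).filter fun pq => ¬ pq.1 ≠ pq.2)
      = (setA n s ∩ setB n s).image (fun p => (p, p)) := by
    ext ⟨a, b⟩
    simp only [Finset.mem_filter, Finset.mem_product, not_ne_iff, Finset.mem_image,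
      Finset.mem_inter, Prod.ext_iff]
    constructor
    · rintro ⟨⟨ha, hb⟩, rfl⟩; exact ⟨a, ⟨ha, hb⟩, rfl, rfl⟩
    · rintro ⟨c, ⟨hc1, hc2⟩, rfl, rfl⟩; exact ⟨⟨hc1, hc2⟩, rfl⟩
  rw [h1] at h2
  have h3 : ((setA n s ∩ setB n s).image (fun p => (p, p))).card
      = (setA n s ∩ setB n s).card := by
    rw [Finset.card_image_of_injective _ (fun a b h => congrArg Prod.fst h)]
  have h4 := Finset.card_product (setA n s) (setB n s)
  have h5 : (T2 n s).card = ((setA n s ×ˢ setB n s).filter fun pq => pq.1 ≠ pq.2).card := rfl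
  omega

lemma injOn_f2 : Set.InjOn (f2 n s) (T2 n s) := by
  rintro ⟨p, q⟩ h1 ⟨p', q'⟩ h2 heq
  simp only [Finset.coe_filter, T2, setA, setB, Set.mem_setOf_eq, Finset.mem_product,
    Finset.mem_filter, Finset.mem_univ, true_and] at h1 h2
  obtain ⟨⟨ha, hb⟩, hne⟩ := h1
  obtain ⟨⟨ha', hb'⟩, hne'⟩ := h2
  -- values at the four special points
  have e1 : f2 n s (p, q) p = flipA (s p) := f2_eval_p n s (p, q) hne
  have e2 : f2 n s (p, q) q = flipB (s q) := f2_eval_q n s (p, q)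
  have e1' : f2 n s (p', q') p' = flipA (s p') := f2_eval_p n s (p', q') hne'
  have e2' : f2 n s (p', q') q' = flipB (s q') := f2_eval_q n s (p', q')
  have hpp : p = p' := by
    by_contra hcon
    by_cases hq' : p = q'
    · -- then 3 = 1
      have s1 : (s p : ℕ) + (f2 n s (p, q) p : ℕ) = 3 := by rw [e1]; exact flipA_sum _ ha
      have s2 : (s p : ℕ) + (f2 n s (p', q') p : ℕ) = 1 := by
        rw [hq', e2']; exact flipB_sum _ hb'
      rw [heq] at s1
      omega
    · have := f2_eval_other n s (p', q') p (by exact hcon) hq'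
      rw [← heq, e1] at this
      exact flipA_ne _ ha this
  have hqq : q = q' := by
    by_contra hcon
    by_cases hp' : q = p'
    · have s1 : (s q : ℕ) + (f2 n s (p, q) q : ℕ) = 1 := by rw [e2]; exact flipB_sum _ hb
      have s2 : (s q : ℕ) + (f2 n s (p', q') q : ℕ) = 3 := by
        rw [hp', e1']; exact flipA_sum _ ha'
      rw [heq] at s1
      omega
    · have := f2_eval_other n s (p', q') q hp' hcon
      rw [← heq, e2] at this
      exact flipB_ne _ hb this
  rw [hpp, hqq]

lemma f1_ne_center (pv : Fin n × Fin 3) (h : pv ∈ T1 n s) : f1 n s pv ≠ s := by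
  intro hcon
  have := congrFun hcon pv.1
  rw [f1, Function.update_self] at this
  exact (Finset.mem_filter.mp h).2 this

lemma f2_props (pq : Fin n × Fin n) (h : pq ∈ T2 n s) :
    pq.1 ≠ pq.2 ∧ f2 n s pq pq.1 ≠ s pq.1 ∧ f2 n s pq pq.2 ≠ s pq.2 := by
  simp only [T2, setA, setB, Finset.mem_filter, Finset.mem_product, Finset.mem_univ,
    true_and] at h
  obtain ⟨⟨ha, hb⟩, hne⟩ := h
  refine ⟨hne, ?_, ?_⟩
  · rw [f2_eval_p n s pq hne]; exact flipA_ne _ ha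
  · rw [f2_eval_q]; exact flipB_ne _ hb

lemma card_ballF : (ballF n s).card = 1 + 2 * n + (T2 n s).card := by
  have d1 : Disjoint ({s} : Finset (Fin n → Fin 3)) ((T1 n s).image (f1 n s)) := by
    rw [Finset.disjoint_left]
    intro a ha hb
    rw [Finset.mem_singleton] at ha
    obtain ⟨pv, hpv, heq⟩ := Finset.mem_image.mp hb
    exact f1_ne_center n s pv hpv (heq.trans ha)
  have d2 : Disjoint (({s} : Finset (Fin n → Fin 3)) ∪ (T1 n s).image (f1 n s))
      ((T2 n s).image (f2 n s)) := by
    rw [Finset.disjoint_left]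
    intro a ha hb
    obtain ⟨pq, hpq, heq2⟩ := Finset.mem_image.mp hb
    obtain ⟨hne, hd1, hd2⟩ := f2_props n s pq hpq
    rcases Finset.mem_union.mp ha with ha | ha
    · rw [Finset.mem_singleton] at ha
      exact hd1 (by rw [heq2, ha])
    · obtain ⟨pv, hpv, heq1⟩ := Finset.mem_image.mp ha
      have hoff : ∀ t, t ≠ pv.1 → a t = s t := by
        intro t ht
        rw [← heq1, f1, Function.update_of_ne ht]
      have h1 : pq.1 = pv.1 := by
        by_contra hcon
        exact hd1 (by rw [heq2]; exact hoff pq.1 hcon)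
      have h2 : pq.2 = pv.1 := by
        by_contra hcon
        exact hd2 (by rw [heq2]; exact hoff pq.2 hcon)
      exact hne (h1.trans h2.symm)
  rw [ballF, Finset.card_union_of_disjoint d2, Finset.card_union_of_disjoint d1,
    Finset.card_singleton, Finset.card_image_of_injOn (injOn_f1 n s),
    Finset.card_image_of_injOn (injOn_f2 n s), card_T1]

end Stmt9Aux

/-- For `s ∈ {0,1,2}^n` with `j` zeros and `m` ones, the composite error ball of radius
`(1,1)` centered at `s` has size `2n + 1 + m(n-1) + j(n-m-j)`. -/
theorem stmt_9 (n : ℕ) (s : Fin n → Fin 3)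
    (j m : ℕ)
    (hj : j = (Finset.univ.filter fun p => (s p : ℕ) = 0).card)
    (hm : m = (Finset.univ.filter fun p => (s p : ℕ) = 1).card) :
    (ballTuple 2 n (fun _ => 1) s).ncard
      = 2 * n + 1 + m * (n - 1) + j * (n - m - j) := by
  classical
  have hset : ballTuple 2 n (fun _ => 1) s = ↑(Stmt9Aux.ballF n s) := by
    rw [Stmt9Aux.ball_eq n s]
    ext y
    simp only [Set.mem_setOf_eq, Finset.coe_sort_coe, Finset.mem_coe]
    exact (Stmt9Aux.mem_ballF_iff n s y).symm
  rw [hset, Set.ncard_coe_finset, Stmt9Aux.card_ballF, Stmt9Aux.card_T2]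
  set l := (Finset.univ.filter fun p => (s p : ℕ) = 2).card with hl
  have hn : j + m + l = n := by
    rw [hj, hm, hl, Finset.card_filter, Finset.card_filter, Finset.card_filter,
      ← Finset.sum_add_distrib, ← Finset.sum_add_distrib]
    have : ∀ p ∈ (Finset.univ : Finset (Fin n)),
        ((if (s p : ℕ) = 0 then 1 else 0) + (if (s p : ℕ) = 1 then 1 else 0))
          + (if (s p : ℕ) = 2 then 1 else 0) = 1 := by
      intro p _
      have := (s p).isLt
      split_ifs <;> omega
    rw [Finset.sum_congr rfl this]
    simp
  have hA : (Stmt9Aux.setA n s).card = m + l := by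
    have h1 : Stmt9Aux.setA n s = Finset.univ.filter fun p => ¬ (s p : ℕ) = 0 := by
      ext p
      simp only [Stmt9Aux.setA, Finset.mem_filter, Finset.mem_univ, true_and]
      omega
    have h2 := Finset.card_filter_add_card_filter_not
      (s := (Finset.univ : Finset (Fin n))) (p := fun p => (s p : ℕ) = 0)
    rw [h1]
    simp only [Finset.card_univ, Fintype.card_fin] at h2
    omega
  have hB : (Stmt9Aux.setB n s).card = j + m := by
    have h1 : Stmt9Aux.setB n s = Finset.univ.filter fun p => ¬ (s p : ℕ) = 2 := by
      ext p
      simp only [Stmt9Aux.setB, Finset.mem_filter, Finset.mem_univ, true_and]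
      have := (s p).isLt
      omega
    have h2 := Finset.card_filter_add_card_filter_not
      (s := (Finset.univ : Finset (Fin n))) (p := fun p => (s p : ℕ) = 2)
    rw [h1]
    simp only [Finset.card_univ, Fintype.card_fin] at h2
    omega
  have hAB : (Stmt9Aux.setA n s ∩ Stmt9Aux.setB n s).card = m := by
    have h1 : Stmt9Aux.setA n s ∩ Stmt9Aux.setB n s
        = Finset.univ.filter fun p => (s p : ℕ) = 1 := by
      ext p
      simp only [Stmt9Aux.setA, Stmt9Aux.setB, Finset.mem_inter, Finset.mem_filter,
        Finset.mem_univ, true_and]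
      omega
    rw [h1, ← hm]
  rw [hA, hB, hAB]
  have hjl : n - m - j = l := by omega
  rw [hjl]
  rcases Nat.eq_zero_or_pos m with hm0 | hmpos
  · subst hm0
    have hkey : (0 + l) * (j + 0) = j * l := by ring
    rw [hkey]
    omega
  · obtain ⟨m', rfl⟩ : ∃ m', m = m' + 1 := ⟨m - 1, by omega⟩
    have h1 : n - 1 = j + m' + l := by omega
    rw [h1]
    have hkey : (m' + 1 + l) * (j + (m' + 1))
        = (m' + 1) * (j + m' + l) + j * l + (m' + 1) := by ring
    rw [hkey, Nat.add_sub_cancel]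
    ring
end

section
/- Let s ∈ {0,1,2}^n have m ones. Then the composite error ball of radius 2 centered at s has size n²/2 + 3n/2 + 1 + m(n-1) + (m² - m)/2. -/
/-! ### Auxiliary definitions and lemmas for `stmt_10` -/

/-- The canonical valid column for letter `a ∈ {0,1,2}`. -/
def col3 (a : Fin 3) : Fin 2 → Bool := fun j => decide (2 - (j:ℕ) ≤ (a:ℕ))

/-- ℓ¹-distance between two ternary words. -/
def wt3 (n : ℕ) (s y : Fin n → Fin 3) : ℕ := ∑ p, Nat.dist (s p : ℕ) (y p : ℕ)

/-- Number of words within ℓ¹-distance `t` of `s`. -/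
def cnt3 (t n : ℕ) (s : Fin n → Fin 3) : ℕ :=
  ∑ y : Fin n → Fin 3, if wt3 n s y ≤ t then 1 else 0

def cntAux (t d n : ℕ) (s : Fin n → Fin 3) : ℕ :=
  ∑ y : Fin n → Fin 3, if d + wt3 n s y ≤ t then 1 else 0

/-- Number of ones in `s`. -/
def ones3 (n : ℕ) (s : Fin n → Fin 3) : ℕ := ∑ p, if (s p : ℕ) = 1 then 1 else 0

lemma col3_valid : ∀ a : Fin 3, validCol 2 (col3 a) := by unfold validCol; decide

lemma col3_recon : ∀ a : Fin 3, reconAt 2 (col3 a) = (a : ℕ) := by decide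

lemma col_eq3 : ∀ (a : Fin 3) (c : Fin 2 → Bool), validCol 2 c → (a:ℕ) = reconAt 2 c →
    c = col3 a := by unfold validCol; decide

lemma dist_card3 : ∀ a b : Fin 3,
    (Finset.univ.filter fun j : Fin 2 => ¬ col3 a j = col3 b j).card = Nat.dist (b:ℕ) (a:ℕ) := by
  decide

lemma sum_ham3 (n : ℕ) (s y : Fin n → Fin 3) :
    (∑ j, hammingDist (decompRow 2 n y j) (decompRow 2 n s j)) = wt3 n s y := by
  simp only [hammingDist, Finset.card_filter]
  rw [Finset.sum_comm]
  refine Finset.sum_congr rfl fun p _ => ?_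
  rw [← Finset.card_filter]
  convert dist_card3 (y p) (s p) using 2
  rfl

lemma ball_eq3 (n : ℕ) (s : Fin n → Fin 3) :
    ballTotal 2 n 2 s = {y | wt3 n s y ≤ 2} := by
  ext y
  constructor
  · rintro ⟨r, hr, hv, hy⟩
    have hre : r = decompRow 2 n y := by
      funext j p
      rw [congrFun (col_eq3 (y p) _ (hv p) (hy p)) j]
      rfl
    rw [hre, sum_ham3] at hr
    exact hr
  · intro h
    refine ⟨decompRow 2 n y, ?_, ?_, ?_⟩
    · rw [sum_ham3]; exact h
    · exact fun p => col3_valid (y p)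
    · exact fun p => (col3_recon (y p)).symm

lemma cnt3_zero (t : ℕ) (s : Fin 0 → Fin 3) : cnt3 t 0 s = 1 := by simp [cnt3, wt3]

lemma cntAux_eq (t d n : ℕ) (s : Fin n → Fin 3) :
    cntAux t d n s = if d ≤ t then cnt3 (t - d) n s else 0 := by
  unfold cntAux cnt3
  split
  · refine Finset.sum_congr rfl fun y _ => if_congr (by omega) rfl rfl
  · refine Finset.sum_eq_zero fun y _ => if_neg (by omega)

lemma cnt3_succ (t n : ℕ) (s : Fin (n + 1) → Fin 3) :
    cnt3 t (n + 1) s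
      = ∑ a : Fin 3, cntAux t (Nat.dist (s 0 : ℕ) (a : ℕ)) n (fun p => s p.succ) := by
  unfold cnt3 cntAux
  rw [← (Fin.consEquiv (fun _ => Fin 3)).sum_comp, Fintype.sum_prod_type]
  refine Finset.sum_congr rfl fun a _ => Finset.sum_congr rfl fun z _ => ?_
  congr 1
  unfold wt3
  simp [Fin.consEquiv, Fin.sum_univ_succ]

lemma ones3_succ (n : ℕ) (s : Fin (n + 1) → Fin 3) :
    ones3 (n + 1) s = (if (s 0 : ℕ) = 1 then 1 else 0) + ones3 n (fun p => s p.succ) := by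
  unfold ones3; rw [Fin.sum_univ_succ]

lemma cnt3_c0 (n : ℕ) (s : Fin n → Fin 3) : cnt3 0 n s = 1 := by
  induction n with
  | zero => exact cnt3_zero 0 s
  | succ n ih =>
    rw [cnt3_succ, Fin.sum_univ_three]
    simp only [cntAux_eq]
    have h : (s 0 : ℕ) = 0 ∨ (s 0 : ℕ) = 1 ∨ (s 0 : ℕ) = 2 := by omega
    rcases h with h | h | h <;>
      simp [h, Fin.val_zero, Fin.val_one, Fin.val_two, Nat.dist, ih]

lemma cnt3_c1 (n : ℕ) (s : Fin n → Fin 3) : cnt3 1 n s = 1 + n + ones3 n s := by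
  induction n with
  | zero => simp [cnt3_zero, ones3]
  | succ n ih =>
    rw [cnt3_succ, Fin.sum_univ_three, ones3_succ]
    simp only [cntAux_eq]
    have h : (s 0 : ℕ) = 0 ∨ (s 0 : ℕ) = 1 ∨ (s 0 : ℕ) = 2 := by omega
    rcases h with h | h | h <;>
      · simp [h, Fin.val_zero, Fin.val_one, Fin.val_two, Nat.dist, ih, cnt3_c0]
        omega

lemma cnt3_c2 (n : ℕ) (s : Fin n → Fin 3) :
    2 * cnt3 2 n s + n + 3 * ones3 n s = 2 + 4 * n + (n + ones3 n s) ^ 2 := by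
  induction n with
  | zero => simp [cnt3_zero, ones3]
  | succ n ih =>
    rw [cnt3_succ, Fin.sum_univ_three, ones3_succ]
    simp only [cntAux_eq]
    have h : (s 0 : ℕ) = 0 ∨ (s 0 : ℕ) = 1 ∨ (s 0 : ℕ) = 2 := by omega
    rcases h with h | h | h <;>
      · simp [h, Fin.val_zero, Fin.val_one, Fin.val_two, Nat.dist, cnt3_c0, cnt3_c1]
        nlinarith [ih (fun p => s p.succ)]

/-- For `s ∈ {0,1,2}^n` with `m` ones, the composite error ball of radius `2` centered
at `s` has size `n²/2 + 3n/2 + 1 + m(n-1) + (m²-m)/2`. -/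
theorem stmt_10 (n : ℕ) (s : Fin n → Fin 3) (m : ℕ)
    (hm : m = (Finset.univ.filter fun p => (s p : ℕ) = 1).card) :
    ((ballTotal 2 n 2 s).ncard : ℚ)
      = (n : ℚ) ^ 2 / 2 + 3 * (n : ℚ) / 2 + 1 + (m : ℚ) * ((n : ℚ) - 1)
        + ((m : ℚ) ^ 2 - (m : ℚ)) / 2 := by
  have hball : ballTotal 2 n 2 s
      = ↑(Finset.univ.filter fun y : Fin n → Fin 3 => wt3 n s y ≤ 2) := by
    rw [ball_eq3]; ext y; simp
  have hN : (ballTotal 2 n 2 s).ncard = cnt3 2 n s := by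
    rw [hball, Set.ncard_coe_finset, Finset.card_filter]; rfl
  have hm' : m = ones3 n s := by
    rw [hm, Finset.card_filter]; rfl
  have key := cnt3_c2 n s
  rw [← hm'] at key
  rw [hN]
  have keyQ : 2 * (cnt3 2 n s : ℚ) + n + 3 * m = 2 + 4 * n + ((n : ℚ) + m) ^ 2 := by
    exact_mod_cast congrArg (fun x : ℕ => (x : ℚ)) key
  linarith [keyQ]
end

section
/- The average over all s ∈ {0,1,2}^n of the size of the composite error ball of radius (1,1) equals 4n²/9 + 14n/9 + 1. -/
open Finset

namespace S13

instance (k : ℕ) (c : Fin k → Bool) : Decidable (validCol k c) := by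
  unfold validCol; infer_instance

lemma ham_le_one {n : ℕ} (f g : Fin n → Bool) :
    hammingDist f g ≤ 1 ↔ ∃ a : Option (Fin n), ∀ p, f p = xor (decide (a = some p)) (g p) := by
  constructor
  · intro h
    unfold hammingDist at h
    by_cases hE : (univ.filter fun p => f p ≠ g p) = ∅
    · refine ⟨none, fun p => ?_⟩
      have : f p = g p := by
        by_contra hc
        exact (Finset.eq_empty_iff_forall_notMem.mp hE p) (by simpa using hc)
      simp [this]
    · obtain ⟨p₀, hp₀⟩ := Finset.nonempty_iff_ne_empty.mpr hE
      refine ⟨some p₀, fun p => ?_⟩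
      by_cases hp : p = p₀
      · subst hp
        have hne : f p ≠ g p := by simpa using hp₀
        cases hf : f p <;> cases hg : g p <;> simp_all
      · have : f p = g p := by
          by_contra hc
          have hpmem : p ∈ univ.filter fun p => f p ≠ g p := by simpa using hc
          have := Finset.card_le_one.mp h p hpmem p₀ hp₀
          exact hp this
        have : decide (some p₀ = some p) = false := by simp [Ne.symm hp]
        simp_all
  · rintro ⟨a, ha⟩
    unfold hammingDist
    cases a with
    | none =>
      have : (univ.filter fun p => f p ≠ g p) = ∅ := by
        refine Finset.eq_empty_iff_forall_notMem.mpr fun p hp => ?_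
        have := ha p
        simp_all
      simp [this]
    | some p₀ =>
      have hsub : (univ.filter fun p => f p ≠ g p) ⊆ {p₀} := by
        intro p hp
        have hne : f p ≠ g p := by simpa using hp
        have := ha p
        by_cases hpp : p₀ = p
        · simp [hpp]
        · have : decide (some p₀ = some p) = false := by simp [hpp]
          simp_all
      simpa using Finset.card_le_card hsub

lemma validCol2_iff : ∀ c : Fin 2 → Bool, validCol 2 c ↔ (c 0 = true → c 1 = true) := by decide

lemma valid_recon_inj : ∀ c c' : Fin 2 → Bool, validCol 2 c → validCol 2 c' →
    reconAt 2 c = reconAt 2 c' → c = c' := by decide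

lemma pointCond : ∀ (x : Fin 3) (ea eb : Bool),
    ((xor ea (decide (2 ≤ (x:ℕ))) = true → xor eb (decide (1 ≤ (x:ℕ))) = true)) ↔
    ((ea = true ∧ eb = false → x ≠ 0) ∧ (ea = false ∧ eb = true → x ≠ 2) ∧
      (ea = true ∧ eb = true → x ≠ 1)) := by decide

end S13

namespace S13

variable {n : ℕ}

def colF (s : Fin n → Fin 3) (a b : Option (Fin n)) (p : Fin n) : Fin 2 → Bool :=
  ![xor (decide (a = some p)) (decompRow 2 n s 0 p),
    xor (decide (b = some p)) (decompRow 2 n s 1 p)]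

lemma reconAt_le (k : ℕ) (c : Fin k → Bool) : reconAt k c ≤ k := by
  simpa [reconAt] using Finset.card_filter_le (univ : Finset (Fin k)) (fun j => c j = true)

def Phi (s : Fin n → Fin 3) (ab : Option (Fin n) × Option (Fin n)) : Fin n → Fin 3 :=
  fun p => ⟨reconAt 2 (colF s ab.1 ab.2 p), lt_of_le_of_lt (reconAt_le 2 _) (by norm_num)⟩

def V (s : Fin n → Fin 3) : Finset (Option (Fin n) × Option (Fin n)) :=
  univ.filter fun ab => ∀ p, validCol 2 (colF s ab.1 ab.2 p)

lemma mem_ball_iff (s y : Fin n → Fin 3) :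
    y ∈ ballTuple 2 n (fun _ => 1) s ↔ ∃ ab ∈ V s, Phi s ab = y := by
  constructor
  · rintro ⟨r, hd, hv, hy⟩
    obtain ⟨a, ha⟩ := (ham_le_one _ _).mp (hd 0)
    obtain ⟨b, hb⟩ := (ham_le_one _ _).mp (hd 1)
    have hcol : ∀ p, (fun j => r j p) = colF s a b p := by
      intro p; funext j
      fin_cases j
      · simpa [colF] using ha p
      · simpa [colF] using hb p
    refine ⟨(a, b), ?_, ?_⟩
    · simp only [V, mem_filter, mem_univ, true_and]
      intro p
      rw [← hcol p]; exact hv p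
    · funext p
      apply Fin.ext
      have := hy p
      rw [hcol p] at this
      exact this.symm
  · rintro ⟨⟨a, b⟩, hmem, rfl⟩
    refine ⟨fun j => fun p => colF s a b p j, ?_, ?_, ?_⟩
    · intro j
      fin_cases j
      · refine (ham_le_one _ _).mpr ⟨a, fun p => ?_⟩
        simp [colF]
      · refine (ham_le_one _ _).mpr ⟨b, fun p => ?_⟩
        simp [colF]
    · intro p
      simpa using (mem_filter.mp hmem).2 p
    · intro p
      rfl

lemma opt_eq {α : Type*} {a a' : Option α} (h : ∀ p, (a = some p) ↔ (a' = some p)) : a = a' := by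
  cases a with
  | none =>
    cases a' with
    | none => rfl
    | some p => exact absurd ((h p).mpr rfl) (by simp)
  | some p => exact ((h p).mp rfl).symm

lemma phi_injOn (s : Fin n → Fin 3) : Set.InjOn (Phi s) (V s) := by
  rintro ⟨a, b⟩ h1 ⟨a', b'⟩ h2 he
  simp only [Finset.coe_filter, V, Set.mem_setOf_eq, mem_univ, true_and] at h1 h2
  have hc : ∀ p, colF s a b p = colF s a' b' p := by
    intro p
    refine valid_recon_inj _ _ (h1 p) (h2 p) ?_
    exact congrArg Fin.val (congrFun he p)
  have h0 : ∀ p, decide (a = some p) = decide (a' = some p) := by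
    intro p
    have h := congrFun (hc p) 0
    simp only [colF, Matrix.cons_val_zero] at h
    cases decompRow 2 n s 0 p <;> simp_all
  have h1' : ∀ p, decide (b = some p) = decide (b' = some p) := by
    intro p
    have h := congrFun (hc p) 1
    simp only [colF, Matrix.cons_val_one, Matrix.head_cons] at h
    cases decompRow 2 n s 1 p <;> simp_all
  have ea : a = a' := opt_eq fun p => decide_eq_decide.mp (h0 p)
  have eb : b = b' := opt_eq fun p => decide_eq_decide.mp (h1' p)
  rw [ea, eb]

lemma ball_eq (s : Fin n → Fin 3) :
    ballTuple 2 n (fun _ => 1) s = ↑((V s).image (Phi s)) := by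
  ext y
  simp only [Finset.coe_image, Set.mem_image, mem_coe, mem_ball_iff]

lemma ncard_ball (s : Fin n → Fin 3) :
    (ballTuple 2 n (fun _ => 1) s).ncard = (V s).card := by
  rw [ball_eq, Set.ncard_coe_finset, Finset.card_image_of_injOn (phi_injOn s)]

end S13

namespace S13

variable {n : ℕ}

def phiU : Fin 3 → ℚ := fun x => if x = 0 then 0 else 1
def phiV : Fin 3 → ℚ := fun x => if x = 2 then 0 else 1
def phiW : Fin 3 → ℚ := fun x => if x = 1 then 0 else 1

lemma valid_colF_iff (s : Fin n → Fin 3) (a b : Option (Fin n)) (p : Fin n) :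
    validCol 2 (colF s a b p) ↔
      ((a = some p ∧ ¬ b = some p → s p ≠ 0) ∧ (¬ a = some p ∧ b = some p → s p ≠ 2) ∧
        (a = some p ∧ b = some p → s p ≠ 1)) := by
  rw [validCol2_iff]
  have h0 : colF s a b p 0 = xor (decide (a = some p)) (decide (2 ≤ ((s p):ℕ))) := by
    simp [colF, decompRow]
  have h1 : colF s a b p 1 = xor (decide (b = some p)) (decide (1 ≤ ((s p):ℕ))) := by
    simp [colF, decompRow]
  rw [h0, h1, pointCond]
  simp only [decide_eq_true_eq, decide_eq_false_iff_not]

lemma valid_nn (s : Fin n → Fin 3) : ∀ p, validCol 2 (colF s none none p) := by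
  intro p; rw [valid_colF_iff]; simp

lemma valid_sn (s : Fin n → Fin 3) (p₀ : Fin n) :
    (∀ p, validCol 2 (colF s (some p₀) none p)) ↔ s p₀ ≠ 0 := by
  constructor
  · intro h
    exact ((valid_colF_iff s _ _ p₀).mp (h p₀)).1 ⟨rfl, by simp⟩
  · intro h p
    rw [valid_colF_iff]
    refine ⟨?_, by simp, by simp⟩
    rintro ⟨h1, -⟩
    cases Option.some.inj h1
    exact h

lemma valid_ns (s : Fin n → Fin 3) (q₀ : Fin n) :
    (∀ p, validCol 2 (colF s none (some q₀) p)) ↔ s q₀ ≠ 2 := by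
  constructor
  · intro h
    exact ((valid_colF_iff s _ _ q₀).mp (h q₀)).2.1 ⟨by simp, rfl⟩
  · intro h p
    rw [valid_colF_iff]
    refine ⟨by simp, ?_, by simp⟩
    rintro ⟨-, h1⟩
    cases Option.some.inj h1
    exact h

lemma valid_ss_eq (s : Fin n → Fin 3) (p₀ : Fin n) :
    (∀ p, validCol 2 (colF s (some p₀) (some p₀) p)) ↔ s p₀ ≠ 1 := by
  constructor
  · intro h
    exact ((valid_colF_iff s _ _ p₀).mp (h p₀)).2.2 ⟨rfl, rfl⟩
  · intro h p
    rw [valid_colF_iff]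
    refine ⟨?_, ?_, ?_⟩
    · rintro ⟨h1, h2⟩; exact absurd h1 h2
    · rintro ⟨h1, h2⟩; exact absurd h2 h1
    · rintro ⟨h1, -⟩
      cases Option.some.inj h1
      exact h

lemma valid_ss_ne (s : Fin n → Fin 3) (p₀ q₀ : Fin n) (hne : p₀ ≠ q₀) :
    (∀ p, validCol 2 (colF s (some p₀) (some q₀) p)) ↔ (s p₀ ≠ 0 ∧ s q₀ ≠ 2) := by
  constructor
  · intro h
    refine ⟨((valid_colF_iff s _ _ p₀).mp (h p₀)).1 ⟨rfl, ?_⟩,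
      ((valid_colF_iff s _ _ q₀).mp (h q₀)).2.1 ⟨?_, rfl⟩⟩
    · simp [Option.some.injEq, Ne.symm hne]
    · simp [Option.some.injEq, hne]
  · rintro ⟨h1, h2⟩ p
    rw [valid_colF_iff]
    refine ⟨?_, ?_, ?_⟩
    · rintro ⟨e1, -⟩; cases Option.some.inj e1; exact h1
    · rintro ⟨-, e2⟩; cases Option.some.inj e2; exact h2
    · rintro ⟨e1, e2⟩
      cases Option.some.inj e1
      exact absurd (Option.some.inj e2).symm hne

lemma ite_and_mul (P Q : Prop) [Decidable P] [Decidable Q] :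
    (if P ∧ Q then (1:ℚ) else 0) = (if P then (1:ℚ) else 0) * (if Q then (1:ℚ) else 0) := by
  by_cases hP : P <;> by_cases hQ : Q <;> simp [hP, hQ]

lemma cardV (s : Fin n → Fin 3) :
    ((V s).card : ℚ) =
      (1 + ∑ q, phiV (s q)) +
        ∑ p, (phiU (s p) + (phiW (s p) + ∑ q ∈ univ.erase p, phiU (s p) * phiV (s q))) := by
  have hcast : ((V s).card : ℚ) =
      ∑ ab : Option (Fin n) × Option (Fin n),
        if (∀ p, validCol 2 (colF s ab.1 ab.2 p)) then (1:ℚ) else 0 := by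
    rw [V, Finset.card_filter]
    push_cast
    rfl
  rw [hcast, Fintype.sum_prod_type, Fintype.sum_option]
  congr 1
  · rw [Fintype.sum_option]
    congr 1
    · simp [valid_nn s]
    · refine Finset.sum_congr rfl fun q _ => ?_
      rw [if_congr (valid_ns s q) rfl rfl]
      simp [phiV, ite_not]
  · refine Finset.sum_congr rfl fun p _ => ?_
    rw [Fintype.sum_option]
    have h1 : (if (∀ q, validCol 2 (colF s (some p) none q)) then (1:ℚ) else 0) = phiU (s p) := by
      rw [if_congr (valid_sn s p) rfl rfl]
      simp [phiU, ite_not]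
    rw [h1]
    congr 1
    have key : ∀ q : Fin n, (if (∀ x, validCol 2 (colF s (some p) (some q) x)) then (1:ℚ) else 0)
        = (if p = q then phiW (s p) else phiU (s p) * phiV (s q)) := by
      intro q
      by_cases hpq : p = q
      · subst hpq
        rw [if_pos rfl, if_congr (valid_ss_eq s p) rfl rfl]
        simp [phiW, ite_not]
      · rw [if_neg hpq, if_congr (valid_ss_ne s p q hpq) rfl rfl, ite_and_mul]
        simp [phiU, phiV, ite_not]
    rw [Finset.sum_congr rfl fun q _ => key q]
    rw [← Finset.add_sum_erase univ _ (Finset.mem_univ p), if_pos rfl]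
    congr 1
    refine Finset.sum_congr rfl fun q hq => ?_
    rw [if_neg (Ne.symm (Finset.mem_erase.mp hq).1)]

end S13

namespace S13

variable {n : ℕ}

lemma marg1 {α : Type} [Fintype α] [DecidableEq α] (φ : Fin 3 → ℚ) (p : α) :
    ∑ s : α → Fin 3, φ (s p) = 3 ^ (Fintype.card α) / 3 * ∑ x, φ x := by
  have h1 : ∑ s : α → Fin 3, φ (s p) = ∑ z : Fin 3 × ({ j // j ≠ p } → Fin 3), φ z.1 :=
    Fintype.sum_equiv (Equiv.funSplitAt p (Fin 3)) _ _ (fun s => rfl)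
  have hcard : (Fintype.card ({ j // j ≠ p } → Fin 3) : ℚ) = 3 ^ (Fintype.card α) / 3 := by
    have hpos : 1 ≤ Fintype.card α := Fintype.card_pos_iff.mpr ⟨p⟩
    have hsub : Fintype.card { j // j ≠ p } = Fintype.card α - 1 := by
      simpa using Fintype.card_subtype_compl (· = p)
    rw [Fintype.card_fun, hsub, Fintype.card_fin]
    have : (3:ℚ) ^ Fintype.card α = 3 ^ (Fintype.card α - 1) * 3 := by
      rw [← pow_succ]
      congr 1
      omega
    rw [this]
    push_cast
    ring
  rw [h1, Fintype.sum_prod_type]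
  simp only [Finset.sum_const, card_univ, nsmul_eq_mul]
  rw [← Finset.mul_sum, hcard]

lemma marg2 {α : Type} [Fintype α] [DecidableEq α] (φ ψ : Fin 3 → ℚ) (p q : α) (hqp : q ≠ p) :
    ∑ s : α → Fin 3, φ (s p) * ψ (s q) =
      3 ^ (Fintype.card α) / 9 * ((∑ x, φ x) * (∑ x, ψ x)) := by
  have hpos : 1 ≤ Fintype.card α := Fintype.card_pos_iff.mpr ⟨p⟩
  have h1 : ∑ s : α → Fin 3, φ (s p) * ψ (s q) =
      ∑ z : Fin 3 × ({ j // j ≠ p } → Fin 3), φ z.1 * ψ (z.2 ⟨q, hqp⟩) :=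
    Fintype.sum_equiv (Equiv.funSplitAt p (Fin 3)) _ _ (fun s => rfl)
  rw [h1, Fintype.sum_prod_type]
  have h2 : ∀ x : Fin 3, ∑ g : { j // j ≠ p } → Fin 3, φ x * ψ (g ⟨q, hqp⟩)
      = φ x * (3 ^ (Fintype.card { j // j ≠ p }) / 3 * ∑ v, ψ v) := by
    intro x
    rw [← Finset.mul_sum, marg1]
  rw [Finset.sum_congr rfl fun x _ => h2 x]
  have hsub : Fintype.card { j // j ≠ p } = Fintype.card α - 1 := by
    simpa using Fintype.card_subtype_compl (· = p)
  have h3 : (3:ℚ) ^ (Fintype.card { j // j ≠ p }) / 3 = 3 ^ (Fintype.card α) / 9 := by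
    rw [hsub]
    have : (3:ℚ) ^ Fintype.card α = 3 ^ (Fintype.card α - 1) * 3 := by
      rw [← pow_succ]
      congr 1
      omega
    rw [this]
    ring
  rw [h3, ← Finset.sum_mul]
  ring

lemma sum_phiU : ∑ x, phiU x = 2 := by
  rw [Fin.sum_univ_three]; simp [phiU]; norm_num
lemma sum_phiV : ∑ x, phiV x = 2 := by
  rw [Fin.sum_univ_three]; simp [phiV]; norm_num
lemma sum_phiW : ∑ x, phiW x = 2 := by
  rw [Fin.sum_univ_three]; simp [phiW]; norm_num

lemma single_sum (φ : Fin 3 → ℚ) (hφ : ∑ x, φ x = 2) :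
    ∑ s : Fin n → Fin 3, ∑ p : Fin n, φ (s p) = n * ((3:ℚ) ^ n / 3 * 2) := by
  rw [Finset.sum_comm]
  have h : ∀ p : Fin n, ∑ s : Fin n → Fin 3, φ (s p) = (3:ℚ) ^ n / 3 * 2 := by
    intro p
    rw [marg1, hφ, Fintype.card_fin]
  rw [Finset.sum_congr rfl fun p _ => h p]
  simp [mul_comm]

lemma double_sum :
    ∑ s : Fin n → Fin 3, ∑ p : Fin n, ∑ q ∈ univ.erase p, phiU (s p) * phiV (s q)
      = n * (((n:ℚ) - 1) * ((3:ℚ) ^ n / 9 * 4)) := by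
  rw [Finset.sum_comm]
  have h : ∀ p : Fin n, ∑ s : Fin n → Fin 3, ∑ q ∈ univ.erase p, phiU (s p) * phiV (s q)
      = ((n:ℚ) - 1) * ((3:ℚ) ^ n / 9 * 4) := by
    intro p
    rw [Finset.sum_comm]
    have h2 : ∀ q ∈ univ.erase p, ∑ s : Fin n → Fin 3, phiU (s p) * phiV (s q)
        = (3:ℚ) ^ n / 9 * 4 := by
      intro q hq
      rw [marg2 phiU phiV p q (Finset.mem_erase.mp hq).1, sum_phiU, sum_phiV, Fintype.card_fin]
      norm_num
    rw [Finset.sum_congr rfl h2, Finset.sum_const, Finset.card_erase_of_mem (Finset.mem_univ p),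
      card_univ, Fintype.card_fin, nsmul_eq_mul]
    congr 1
    have hpos : 1 ≤ n := p.pos
    push_cast [Nat.cast_sub hpos]
    ring
  rw [Finset.sum_congr rfl fun p _ => h p]
  simp [mul_comm]

end S13

open S13 Finset


/-- The average over all `s ∈ {0,1,2}^n` of the size of the composite error ball of
radius `(1,1)` equals `4n²/9 + 14n/9 + 1`. -/
theorem stmt_13 (n : ℕ) :
    (∑ s : Fin n → Fin 3, ((ballTuple 2 n (fun _ => 1) s).ncard : ℚ)) / 3 ^ n
      = 4 * (n : ℚ) ^ 2 / 9 + 14 * (n : ℚ) / 9 + 1 := by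
  have hstep : ∀ s : Fin n → Fin 3, ((ballTuple 2 n (fun _ => 1) s).ncard : ℚ) =
      (1 + ∑ q, phiV (s q)) +
        ∑ p, (phiU (s p) + (phiW (s p) + ∑ q ∈ univ.erase p, phiU (s p) * phiV (s q))) := by
    intro s
    rw [← cardV s]
    exact_mod_cast congrArg Nat.cast (ncard_ball s)
  rw [Finset.sum_congr rfl fun s _ => hstep s]
  simp only [Finset.sum_add_distrib]
  have h1 : ∑ _s : Fin n → Fin 3, (1:ℚ) = 3 ^ n := by
    simp [Finset.card_univ, Fintype.card_fun]
  rw [h1, single_sum phiV sum_phiV, single_sum phiU sum_phiU, single_sum phiW sum_phiW,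
    double_sum]
  have h3 : (3:ℚ) ^ n ≠ 0 := by positivity
  field_simp
  ring
end

section
/- Let X be binomial with parameters n and p = (k-1)/(k+1) for k ≥ 2. Then E[1/(n+X)] ≥ (k+1)/(2kn), and for all n ≥ 1, E[1/(n+X)] ≤ 1/(2kn/(k+1) - 1). Consequently, Σ_{m=0}^n C(n,m)((k-1)/2)^m / (n+m) ≤ ((k+1)/2)^n / (2kn/(k+1) - 1). -/
open Finset

private lemma binom_first_aux (n : ℕ) (x y : ℝ) :
    ∑ m ∈ range (n+1), (n.choose m : ℝ) * x ^ m * y ^ (n - m) * m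
      = n * x * (x + y) ^ (n - 1) := by
  cases n with
  | zero => simp
  | succ n =>
    rw [Finset.sum_range_succ']
    have key : ∀ j ∈ range (n+1),
        ((n+1).choose (j+1) : ℝ) * x ^ (j+1) * y ^ (n + 1 - (j+1)) * ((j+1 : ℕ) : ℝ)
          = ((n:ℝ)+1) * x * ((n.choose j : ℝ) * x ^ j * y ^ (n - j)) := by
      intro j _
      have h : ((n:ℝ)+1) * (n.choose j : ℝ) = ((n+1).choose (j+1) : ℝ) * ((j:ℝ)+1) := by
        exact_mod_cast Nat.add_one_mul_choose_eq n j
      have hs : n + 1 - (j + 1) = n - j := by omega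
      rw [hs]
      push_cast
      linear_combination (-(x ^ (j+1) * y ^ (n - j))) * h
    rw [Finset.sum_congr rfl key, ← Finset.mul_sum]
    have hb : ∑ j ∈ range (n+1), (n.choose j : ℝ) * x ^ j * y ^ (n - j) = (x + y) ^ n := by
      rw [add_pow]
      exact Finset.sum_congr rfl (fun m _ => by ring)
    rw [hb]
    simp only [Nat.cast_zero, mul_zero, add_zero, Nat.add_sub_cancel]
    push_cast
    ring

private lemma binom_second_aux (n : ℕ) (x y : ℝ) :
    ∑ m ∈ range (n+1), (n.choose m : ℝ) * x ^ m * y ^ (n - m) * ((m:ℝ) * ((m:ℝ) - 1))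
      = n * ((n:ℝ) - 1) * x ^ 2 * (x + y) ^ (n - 2) := by
  cases n with
  | zero => simp
  | succ n =>
    rw [Finset.sum_range_succ']
    have key : ∀ j ∈ range (n+1),
        ((n+1).choose (j+1) : ℝ) * x ^ (j+1) * y ^ (n + 1 - (j+1))
            * ((((j+1:ℕ)):ℝ) * ((((j+1:ℕ)):ℝ) - 1))
          = ((n:ℝ)+1) * x * ((n.choose j : ℝ) * x ^ j * y ^ (n - j) * (j:ℝ)) := by
      intro j _
      have h : ((n:ℝ)+1) * (n.choose j : ℝ) = ((n+1).choose (j+1) : ℝ) * ((j:ℝ)+1) := by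
        exact_mod_cast Nat.add_one_mul_choose_eq n j
      have hs : n + 1 - (j + 1) = n - j := by omega
      rw [hs]
      push_cast
      linear_combination (-(x ^ (j+1) * y ^ (n - j) * (j:ℝ))) * h
    rw [Finset.sum_congr rfl key, ← Finset.mul_sum, binom_first_aux]
    simp only [Nat.cast_zero, mul_zero, add_zero, zero_mul]
    have h2 : n + 1 - 2 = n - 1 := by omega
    rw [h2]
    push_cast
    ring

private lemma upper_calc_aux (p μ E R : ℝ) (hpq1 : p * (1 - p) ≤ 1) (hμ1 : 1 < μ)
    (hE2 : E = 1/μ + R) (hRup : R ≤ p * (1 - p) / μ^2) : E ≤ 1/(μ - 1) := by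
  have hμ0 : (0:ℝ) < μ := by linarith
  have h1 : p * (1 - p) / μ^2 ≤ 1/(μ*(μ-1)) := by
    rw [div_le_div_iff₀ (by positivity) (mul_pos hμ0 (by linarith))]
    have hb : (0:ℝ) ≤ μ * (μ - 1) := le_of_lt (mul_pos hμ0 (by linarith))
    have h3 : p * (1 - p) * (μ * (μ - 1)) ≤ 1 * (μ * (μ - 1)) :=
      mul_le_mul_of_nonneg_right hpq1 hb
    nlinarith [h3]
  have h2 : 1/μ + 1/(μ*(μ-1)) = 1/(μ-1) := by
    have ha : μ ≠ 0 := hμ0.ne'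
    have hb : μ - 1 ≠ 0 := by linarith
    field_simp
    try ring
  rw [hE2]; linarith

/-- Let `X` be binomial with parameters `n ≥ 1` and `p = (k-1)/(k+1)`, `k ≥ 2`. Then
`E[1/(n+X)] ≥ (k+1)/(2kn)` and `E[1/(n+X)] ≤ 1/(2kn/(k+1) - 1)`; consequently
`∑_{m=0}^n C(n,m)((k-1)/2)^m / (n+m) ≤ ((k+1)/2)^n / (2kn/(k+1) - 1)`. -/
theorem stmt_17 (k n : ℕ) (hk : 2 ≤ k) (hn : 1 ≤ n) :
    let p : ℝ := ((k : ℝ) - 1) / ((k : ℝ) + 1)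
    -- the expectation `E[1/(n+X)]` for `X ~ Binomial(n, p)`
    let E : ℝ := ∑ m ∈ Finset.range (n + 1),
      (n.choose m : ℝ) * p ^ m * (1 - p) ^ (n - m) * (1 / ((n : ℝ) + m))
    ((k : ℝ) + 1) / (2 * k * n) ≤ E ∧
    E ≤ 1 / (2 * (k : ℝ) * n / ((k : ℝ) + 1) - 1) ∧
    ∑ m ∈ Finset.range (n + 1),
        (n.choose m : ℝ) * (((k : ℝ) - 1) / 2) ^ m / ((n : ℝ) + m)
      ≤ (((k : ℝ) + 1) / 2) ^ n / (2 * (k : ℝ) * n / ((k : ℝ) + 1) - 1) := by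
  intro p E
  have hpdef : p = ((k : ℝ) - 1) / ((k : ℝ) + 1) := rfl
  have hEdef : E = ∑ m ∈ Finset.range (n + 1),
      (n.choose m : ℝ) * p ^ m * (1 - p) ^ (n - m) * (1 / ((n : ℝ) + m)) := rfl
  have hK : (2:ℝ) ≤ (k:ℝ) := by exact_mod_cast hk
  have hN : (1:ℝ) ≤ (n:ℝ) := by exact_mod_cast hn
  have hK1 : (0:ℝ) < (k:ℝ) + 1 := by linarith
  have hp0 : 0 ≤ p := by rw [hpdef]; apply div_nonneg <;> linarith
  have hq : 1 - p = 2 / ((k:ℝ) + 1) := by rw [hpdef]; field_simp; ring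
  have hq0 : 0 ≤ 1 - p := by rw [hq]; positivity
  have hp3 : 1/3 ≤ p := by rw [hpdef, le_div_iff₀ hK1]; linarith
  have hp1 : p ≤ 1 := by linarith
  have hpq1 : p * (1 - p) ≤ 1 := by nlinarith
  set W : ℕ → ℝ := fun m => (n.choose m : ℝ) * p ^ m * (1 - p) ^ (n - m) with hWdef
  have hW : ∀ m, 0 ≤ W m := fun m =>
    mul_nonneg (mul_nonneg (Nat.cast_nonneg _) (pow_nonneg hp0 _)) (pow_nonneg hq0 _)
  have hone : p + (1 - p) = 1 := by ring
  have S0 : ∑ m ∈ range (n+1), W m = 1 := by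
    have h1 : (p + (1-p))^n = ∑ m ∈ range (n+1), p^m * (1-p)^(n-m) * (n.choose m : ℝ) :=
      add_pow _ _ _
    rw [hone, one_pow] at h1
    rw [h1]
    exact Finset.sum_congr rfl (fun m _ => by simp only [hWdef]; ring)
  have S1 : ∑ m ∈ range (n+1), W m * m = (n:ℝ) * p := by
    have h := binom_first_aux n p (1-p)
    rw [hone, one_pow, mul_one] at h
    exact h
  have S2 : ∑ m ∈ range (n+1), W m * ((m:ℝ) * ((m:ℝ) - 1))
      = (n:ℝ) * ((n:ℝ) - 1) * p^2 := by
    have h := binom_second_aux n p (1-p)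
    rw [hone, one_pow, mul_one] at h
    exact h
  set μ : ℝ := (n:ℝ) + (n:ℝ) * p with hμdef
  have hμ43 : (4:ℝ)/3 ≤ μ := by nlinarith
  have hμ0 : (0:ℝ) < μ := by linarith
  have hμ1 : (1:ℝ) < μ := by linarith
  have hnm : ∀ m : ℕ, (0:ℝ) < (n:ℝ) + m := by
    intro m
    have := Nat.cast_nonneg (α := ℝ) m
    linarith
  have key : ∀ m ∈ range (n+1),
      W m * (1/((n:ℝ)+m)) = W m * (1/μ) - (W m * ((m:ℝ) - (n:ℝ)*p))/μ^2
        + W m * (((m:ℝ) - (n:ℝ)*p)^2/(((n:ℝ)+m)*μ^2)) := by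
    intro m _
    have h1 := (hnm m).ne'
    have h2 := hμ0.ne'
    field_simp
    ring
  have Smid : ∑ m ∈ range (n+1), W m * ((m:ℝ) - (n:ℝ)*p) = 0 := by
    have h : ∀ m ∈ range (n+1),
        W m * ((m:ℝ) - (n:ℝ)*p) = W m * m - ((n:ℝ)*p) * W m := fun m _ => by ring
    rw [Finset.sum_congr rfl h, Finset.sum_sub_distrib, ← Finset.mul_sum, S1, S0]
    ring
  set R : ℝ := ∑ m ∈ range (n+1), W m * (((m:ℝ) - (n:ℝ)*p)^2/(((n:ℝ)+m)*μ^2)) with hRdef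
  have hE2 : E = 1/μ + R := by
    rw [hEdef, Finset.sum_congr rfl key, Finset.sum_add_distrib, Finset.sum_sub_distrib,
      ← Finset.sum_mul, ← Finset.sum_div, S0, Smid]
    ring
  have hR0 : 0 ≤ R := by
    apply Finset.sum_nonneg
    intro m _
    apply mul_nonneg (hW m)
    apply div_nonneg (sq_nonneg _)
    exact mul_nonneg (hnm m).le (sq_nonneg _)
  have Vb : ∑ m ∈ range (n+1), W m * ((m:ℝ) - (n:ℝ)*p)^2 = (n:ℝ) * p * (1 - p) := by
    have h : ∀ m ∈ range (n+1),
        W m * ((m:ℝ) - (n:ℝ)*p)^2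
          = W m * ((m:ℝ) * ((m:ℝ) - 1)) + (1 - 2*(n:ℝ)*p) * (W m * m)
            + ((n:ℝ)*p)^2 * W m := fun m _ => by ring
    rw [Finset.sum_congr rfl h, Finset.sum_add_distrib, Finset.sum_add_distrib,
      ← Finset.mul_sum, ← Finset.mul_sum, S2, S1, S0]
    ring
  have hRup : R ≤ p * (1 - p) / μ^2 := by
    have step : ∀ m ∈ range (n+1),
        W m * (((m:ℝ) - (n:ℝ)*p)^2/(((n:ℝ)+m)*μ^2))
          ≤ (W m * ((m:ℝ) - (n:ℝ)*p)^2) * (1/((n:ℝ)*μ^2)) := by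
      intro m _
      have h1 : (0:ℝ) < (n:ℝ) * μ^2 := by positivity
      have h2 : (n:ℝ) * μ^2 ≤ ((n:ℝ)+m) * μ^2 := by
        have := Nat.cast_nonneg (α := ℝ) m
        nlinarith [sq_nonneg μ]
      have h3 : ((m:ℝ) - (n:ℝ)*p)^2/(((n:ℝ)+m)*μ^2) ≤ ((m:ℝ) - (n:ℝ)*p)^2 * (1/((n:ℝ)*μ^2)) := by
        rw [mul_one_div]
        exact div_le_div_of_nonneg_left (sq_nonneg _) h1 h2 |>.trans_eq rfl
      calc W m * (((m:ℝ) - (n:ℝ)*p)^2/(((n:ℝ)+m)*μ^2))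
          ≤ W m * (((m:ℝ) - (n:ℝ)*p)^2 * (1/((n:ℝ)*μ^2))) :=
            mul_le_mul_of_nonneg_left h3 (hW m)
        _ = (W m * ((m:ℝ) - (n:ℝ)*p)^2) * (1/((n:ℝ)*μ^2)) := by ring
    calc R ≤ ∑ m ∈ range (n+1), (W m * ((m:ℝ) - (n:ℝ)*p)^2) * (1/((n:ℝ)*μ^2)) :=
          Finset.sum_le_sum step
      _ = ((n:ℝ) * p * (1 - p)) * (1/((n:ℝ)*μ^2)) := by rw [← Finset.sum_mul, Vb]
      _ = p * (1 - p) / μ^2 := by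
          rw [mul_one_div, div_eq_div_iff (by positivity) (by positivity)]
          ring
  have hEW : E = ∑ m ∈ range (n+1), W m * (1/((n:ℝ)+m)) := by
    rw [hEdef]
    try exact Finset.sum_congr rfl (fun m _ => by simp only [hWdef])
  clear_value p E W μ R
  have hp' : p * ((k:ℝ)+1) = (k:ℝ) - 1 := by
    rw [hpdef]; exact div_mul_cancel₀ _ hK1.ne'
  have hμval : μ * ((k:ℝ)+1) = 2 * (k:ℝ) * (n:ℝ) := by
    rw [hμdef]; linear_combination (n:ℝ) * hp'
  have hlowval : ((k:ℝ) + 1) / (2 * k * n) = 1/μ := by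
    rw [div_eq_div_iff (by positivity) hμ0.ne']
    linear_combination hμval
  have hupval : 2 * (k:ℝ) * n / ((k:ℝ) + 1) - 1 = μ - 1 := by
    have h : 2 * (k:ℝ) * n / ((k:ℝ) + 1) = μ := by
      rw [eq_comm, eq_div_iff hK1.ne']; linear_combination hμval
    rw [h]
  have hupper : E ≤ 1/(μ - 1) := upper_calc_aux p μ E R hpq1 hμ1 hE2 hRup
  refine ⟨?_, ?_, ?_⟩
  · rw [hlowval, hE2]; exact le_add_of_nonneg_right hR0
  · rw [hupval]; exact hupper
  · have h3 : ∀ m ∈ range (n+1),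
        (n.choose m : ℝ) * (((k:ℝ) - 1) / 2) ^ m / ((n:ℝ) + m)
          = (((k:ℝ) + 1) / 2) ^ n * (W m * (1/((n:ℝ)+m))) := by
      intro m hm
      have hm' : m ≤ n := Nat.lt_succ_iff.mp (Finset.mem_range.mp hm)
      have e1 : ((k:ℝ)+1)^m * ((k:ℝ)+1)^(n-m) = ((k:ℝ)+1)^n := by
        rw [← pow_add, Nat.add_sub_cancel' hm']
      have e2 : (2:ℝ)^(n-m) * 2^m = (2:ℝ)^n := by
        rw [← pow_add]
        congr 1
        omega
      have hpow : (((k:ℝ)+1)/2)^n * (((k:ℝ)-1)/((k:ℝ)+1))^m * ((2:ℝ)/((k:ℝ)+1))^(n-m)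
          = (((k:ℝ)-1)/2)^m := by
        simp only [div_pow]
        rw [div_mul_div_comm, div_mul_div_comm]
        rw [div_eq_div_iff (by positivity) (by positivity)]
        linear_combination ((k:ℝ)+1)^n * ((k:ℝ)-1)^m * e2
          - ((k:ℝ)-1)^m * 2^n * e1
      have hWm : W m = (n.choose m : ℝ) * (((k:ℝ)-1)/((k:ℝ)+1))^m * ((2:ℝ)/((k:ℝ)+1))^(n-m) := by
        rw [hWdef]
        simp only
        rw [hq, hpdef]
      rw [hWm, ← hpow]
      ring
    rw [Finset.sum_congr rfl h3, ← Finset.mul_sum, ← hEW]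
    have hpos : (0:ℝ) ≤ (((k:ℝ)+1)/2)^n := by positivity
    calc (((k:ℝ)+1)/2)^n * E ≤ (((k:ℝ)+1)/2)^n * (1/(μ-1)) :=
          mul_le_mul_of_nonneg_left hupper hpos
      _ = (((k:ℝ)+1)/2)^n / (2 * (k:ℝ) * n / ((k:ℝ) + 1) - 1) := by
          rw [hupval, mul_one_div]
end

section
/- For all natural numbers n, Σ_{m=0}^n C(n,m) Σ_{j=0}^{n-m} C(n-m,j) · 1/((j+1)(n-m-j+1)) ≤ 3^(n+2)/((n+1)(n+2)). -/
open Finset in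
private lemma lemB18 (N : ℕ) :
    ∑ j ∈ range (N+1), (N.choose j : ℚ)/((j:ℚ)+1) = (2^(N+1)-1)/((N:ℚ)+1) := by
  have h1 : ∀ j ∈ range (N+1), (N.choose j : ℚ)/((j:ℚ)+1)
      = ((N+1).choose (j+1) : ℚ)/((N:ℚ)+1) := by
    intro j _
    have h := Nat.add_one_mul_choose_eq N j
    have h' : ((N:ℚ)+1) * (N.choose j : ℚ) = ((N+1).choose (j+1) : ℚ) * ((j:ℚ)+1) := by
      exact_mod_cast h
    rw [div_eq_div_iff (by positivity) (by positivity)]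
    linarith [h']
  rw [Finset.sum_congr rfl h1, ← Finset.sum_div]
  congr 1
  have h2 : ∑ j ∈ range (N+2), ((N+1).choose j : ℚ) = 2^(N+1) := by
    exact_mod_cast congrArg (Nat.cast (R := ℚ)) (Nat.sum_range_choose (N+1))
  have h3 := Finset.sum_range_succ' (fun j => ((N+1).choose j : ℚ)) (N+1)
  simp only [Nat.choose_zero_right, Nat.cast_one] at h3
  linarith [h2, h3]

open Finset in
private lemma lemA18 (N : ℕ) :
    ∑ j ∈ range (N+1), (N.choose j : ℚ) * (1 / (((j : ℚ) + 1) * (((N - j : ℕ) : ℚ) + 1)))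
      = 2*(2^(N+1)-1)/(((N:ℚ)+1)*((N:ℚ)+2)) := by
  have step : ∀ j ∈ range (N+1),
      (N.choose j : ℚ) * (1 / (((j : ℚ) + 1) * (((N - j : ℕ) : ℚ) + 1)))
      = (1/((N:ℚ)+2)) * ((N.choose j : ℚ)/((j:ℚ)+1) + (N.choose j : ℚ)/(((N - j : ℕ) : ℚ)+1)) := by
    intro j hj
    have hj' : j ≤ N := Nat.lt_succ_iff.mp (mem_range.mp hj)
    have hc : ((N - j : ℕ) : ℚ) = (N:ℚ) - j := by
      push_cast [Nat.cast_sub hj']; ring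
    rw [hc]
    have h1 : (j:ℚ) + 1 > 0 := by positivity
    have h2 : (N:ℚ) - j + 1 > 0 := by
      have : (j:ℚ) ≤ N := by exact_mod_cast hj'
      linarith
    field_simp
    ring
  rw [Finset.sum_congr rfl step, ← Finset.mul_sum, Finset.sum_add_distrib]
  have hrefl : ∑ j ∈ range (N+1), (N.choose j : ℚ)/(((N - j : ℕ) : ℚ)+1)
      = ∑ j ∈ range (N+1), (N.choose j : ℚ)/((j:ℚ)+1) := by
    rw [← Finset.sum_range_reflect]
    apply Finset.sum_congr rfl
    intro j hj
    have hj' : j ≤ N := Nat.lt_succ_iff.mp (mem_range.mp hj)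
    simp only [Nat.add_sub_cancel]
    rw [Nat.choose_symm hj', Nat.sub_sub_self hj']
  rw [hrefl, lemB18]
  have hN1 : ((N:ℚ)+1) ≠ 0 := by positivity
  have hN2 : ((N:ℚ)+2) ≠ 0 := by positivity
  field_simp
  ring

open Finset in
private lemma natsum18 (n : ℕ) :
    ∑ l ∈ range (n+1), (n+2).choose (l+2) * 2^(l+2) ≤ 3^(n+2) := by
  have hb := add_pow 2 1 (n+2) (R := ℕ)
  have h1 := Finset.sum_range_succ' (fun k => 2^k * 1^(n+2-k) * (n+2).choose k) (n+2)
  have h2 := Finset.sum_range_succ' (fun k => 2^(k+1) * 1^(n+2-(k+1)) * (n+2).choose (k+1)) (n+1)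
  simp only [one_pow, mul_one] at hb h1 h2 ⊢
  norm_num at hb
  have h2' : ∑ x ∈ range (n+2), 2^(x+1) * (n+2).choose (x+1)
      = ∑ x ∈ range (n+1), 2^(x+1+1) * (n+2).choose (x+1+1) + 2^(0+1) * (n+2).choose (0+1) := h2
  have hg : ∑ l ∈ range (n+1), (n+2).choose (l+2) * 2^(l+2)
      = ∑ l ∈ range (n+1), 2^(l+1+1) * (n+2).choose (l+1+1) := by
    apply Finset.sum_congr rfl; intro l _; ring
  have h1' : (3:ℕ)^(n+2) = ∑ x ∈ range (n+2), 2^(x+1) * (n+2).choose (x+1) + 2^0 * (n+2).choose 0 := by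
    rw [hb]; exact h1
  omega

open Finset in
private lemma lemC18 (n : ℕ) :
    ∑ l ∈ range (n+1), (n.choose l : ℚ) * 2^(l+2) / (((l:ℚ)+1)*((l:ℚ)+2))
      ≤ 3^(n+2) / (((n:ℚ)+1)*((n:ℚ)+2)) := by
  have key : ∀ l ∈ range (n+1),
      (n.choose l : ℚ) * 2^(l+2) / (((l:ℚ)+1)*((l:ℚ)+2))
      = ((n+2).choose (l+2) : ℚ) * 2^(l+2) / (((n:ℚ)+1)*((n:ℚ)+2)) := by
    intro l _
    have h1 := Nat.add_one_mul_choose_eq n l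
    have h2 := Nat.add_one_mul_choose_eq (n+1) (l+1)
    have e1 : ((n:ℚ)+1) * (n.choose l : ℚ) = ((n+1).choose (l+1) : ℚ) * ((l:ℚ)+1) := by
      exact_mod_cast h1
    have e2 : ((n:ℚ)+2) * ((n+1).choose (l+1) : ℚ) = ((n+2).choose (l+2) : ℚ) * ((l:ℚ)+2) := by
      exact_mod_cast h2
    have hn : ((n:ℚ)+1)*((n:ℚ)+2) * (n.choose l : ℚ)
        = ((n+2).choose (l+2) : ℚ) * (((l:ℚ)+1)*((l:ℚ)+2)) := by
      nlinarith [e1, e2]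
    rw [div_eq_div_iff (by positivity) (by positivity)]
    linear_combination (2:ℚ)^(l+2) * hn
  rw [Finset.sum_congr rfl key, ← Finset.sum_div]
  gcongr
  have := natsum18 n
  calc ∑ l ∈ range (n+1), ((n+2).choose (l+2) : ℚ) * 2^(l+2)
      = ((∑ l ∈ range (n+1), (n+2).choose (l+2) * 2^(l+2) : ℕ) : ℚ) := by
        push_cast
        apply Finset.sum_congr rfl; intro l _; ring
    _ ≤ ((3^(n+2) : ℕ) : ℚ) := by exact_mod_cast this
    _ = 3^(n+2) := by push_cast; ring

/-- `∑_{m=0}^n C(n,m) ∑_{j=0}^{n-m} C(n-m,j) / ((j+1)(n-m-j+1)) ≤ 3^(n+2)/((n+1)(n+2))`. -/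
theorem stmt_18 (n : ℕ) :
    ∑ m ∈ Finset.range (n + 1), (n.choose m : ℚ) *
        ∑ j ∈ Finset.range (n - m + 1),
          ((n - m).choose j : ℚ) * (1 / (((j : ℚ) + 1) * (((n - m - j : ℕ) : ℚ) + 1)))
      ≤ 3 ^ (n + 2) / (((n : ℚ) + 1) * ((n : ℚ) + 2)) := by
  have step1 : ∑ m ∈ Finset.range (n + 1), (n.choose m : ℚ) *
        ∑ j ∈ Finset.range (n - m + 1),
          ((n - m).choose j : ℚ) * (1 / (((j : ℚ) + 1) * (((n - m - j : ℕ) : ℚ) + 1)))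
      = ∑ m ∈ Finset.range (n + 1), (n.choose m : ℚ) *
          (2*(2^(n-m+1)-1)/((((n-m:ℕ)):ℚ)+1)/((((n-m:ℕ)):ℚ)+2)) := by
    apply Finset.sum_congr rfl
    intro m _
    rw [lemA18 (n - m), div_div]
  rw [step1]
  have step2 : ∑ m ∈ Finset.range (n + 1), (n.choose m : ℚ) *
          (2*(2^(n-m+1)-1)/((((n-m:ℕ)):ℚ)+1)/((((n-m:ℕ)):ℚ)+2))
      ≤ ∑ m ∈ Finset.range (n + 1), (n.choose m : ℚ) *
          (2^(n-m+2)/((((n-m:ℕ)):ℚ)+1)/((((n-m:ℕ)):ℚ)+2)) := by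
    apply Finset.sum_le_sum
    intro m _
    have h1 : (0:ℚ) ≤ (n.choose m : ℚ) := by positivity
    have h2 : 2*((2:ℚ)^(n-m+1)-1) ≤ 2^(n-m+2) := by
      rw [pow_succ]
      ring_nf
      norm_num
    have h3 : (0:ℚ) < ((n-m:ℕ):ℚ)+1 := by positivity
    have h4 : (0:ℚ) < ((n-m:ℕ):ℚ)+2 := by positivity
    gcongr
  refine le_trans step2 ?_
  have step3 : ∑ m ∈ Finset.range (n + 1), (n.choose m : ℚ) *
          (2^(n-m+2)/((((n-m:ℕ)):ℚ)+1)/((((n-m:ℕ)):ℚ)+2))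
      = ∑ l ∈ Finset.range (n + 1), (n.choose l : ℚ) * 2^(l+2) / (((l:ℚ)+1)*((l:ℚ)+2)) := by
    rw [← Finset.sum_range_reflect (fun l => (n.choose l : ℚ) * 2^(l+2) / (((l:ℚ)+1)*((l:ℚ)+2))) (n+1)]
    apply Finset.sum_congr rfl
    intro m hm
    have hm' : m ≤ n := Nat.lt_succ_iff.mp (Finset.mem_range.mp hm)
    simp only [Nat.add_sub_cancel]
    rw [Nat.choose_symm hm', div_div, mul_div_assoc]
  rw [step3]
  exact lemC18 n
end

section
/- If there exists a code C ⊆ {0,...,k}^n such that any single substitution error occurring in channel i of the ordered composite channel can be corrected, then there exists a code C' ⊆ {0,...,k}^n of the same cardinality correcting any single substitution error in channel i+1; in particular the maximal cardinalities S_k(n; e_i) for single-error correction are equal for all channels i ∈ {0,...,k-1}. -/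
instance (k : ℕ) (c : Fin k → Bool) : Decidable (validCol k c) := by
  unfold validCol; infer_instance

/-- The possibly-invalid reconstruction of a column: `some` of the number of ones if
the column is nondecreasing, and `none` (the invalid symbol `?`) otherwise. -/
def reconOpt (k : ℕ) (c : Fin k → Bool) : Option (Fin (k + 1)) :=
  if validCol k c then
    some ⟨reconAt k c,
      Nat.lt_succ_of_le ((Finset.card_filter_le _ _).trans (by simp))⟩
  else none

/-- The set of channel outputs (reconstructions, possibly containing the invalid
symbol `?`) obtainable from codeword `s` when at most one bit is flipped in row `i`
and all other rows are transmitted without error. -/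
def channelOut (k n : ℕ) (i : Fin k) (s : Fin n → Fin (k + 1)) :
    Set (Fin n → Option (Fin (k + 1))) :=
  { y | ∃ r : Fin k → Fin n → Bool,
      hammingDist (r i) (decompRow k n s i) ≤ 1 ∧
      (∀ j, j ≠ i → r j = decompRow k n s j) ∧
      ∀ p, y p = reconOpt k (fun j => r j p) }

/-- `C` corrects any single substitution error occurring in channel `i`: the sets of
possible channel outputs of distinct codewords are disjoint. -/
def isCECC (k n : ℕ) (i : Fin k) (C : Set (Fin n → Fin (k + 1))) : Prop :=
  ∀ c ∈ C, ∀ c' ∈ C, c ≠ c' → Disjoint (channelOut k n i c) (channelOut k n i c')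

/-- The maximal cardinality `S_k(n; e_i)` of a code correcting a single substitution
error in channel `i`. -/
noncomputable def maxCECC (k n : ℕ) (i : Fin k) : ℕ :=
  sSup {m : ℕ | ∃ C : Set (Fin n → Fin (k + 1)), isCECC k n i C ∧ C.ncard = m}


namespace Stmt19

lemma bool_eq_of_iff {a b : Bool} (h : a = true ↔ b = true) : a = b := by
  cases a <;> cases b <;> simp_all

lemma xor_ne_xor (a b c : Bool) : (xor a c ≠ xor b c) ↔ a ≠ b := by
  cases a <;> cases b <;> cases c <;> simp

def sig (k : ℕ) (a : Fin (k+1)) : Fin (k+1) :=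
  ⟨if (a:ℕ) = 0 then k else (a:ℕ) - 1, by split <;> omega⟩
def tau (k : ℕ) (a : Fin (k+1)) : Fin (k+1) :=
  ⟨if (a:ℕ) = k then 0 else (a:ℕ) + 1, by have := a.isLt; split <;> omega⟩

lemma sig_tau (k : ℕ) (a : Fin (k+1)) : sig k (tau k a) = a := by
  have := a.isLt
  ext
  simp only [sig, tau]
  split_ifs <;> simp_all <;> omega

lemma tau_sig (k : ℕ) (a : Fin (k+1)) : tau k (sig k a) = a := by
  have := a.isLt
  ext
  simp only [sig, tau]
  split_ifs <;> simp_all <;> simp only [Fin.ext_iff, Fin.val_zero] at * <;> omega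

lemma sig_injective (k : ℕ) : Function.Injective (sig k) := by
  intro a b h
  have := congrArg (tau k) h
  rwa [tau_sig, tau_sig] at this

lemma tau_injective (k : ℕ) : Function.Injective (tau k) := by
  intro a b h
  have := congrArg (sig k) h
  rwa [sig_tau, sig_tau] at this

def letterCol (k : ℕ) (a : Fin (k+1)) : Fin k → Bool := fun j => decide (k - (j:ℕ) ≤ (a:ℕ))

lemma decompRow_eq_letterCol (k n : ℕ) (s : Fin n → Fin (k+1)) (j : Fin k) (p : Fin n) :
    decompRow k n s j p = letterCol k (s p) j := rfl

def Tcol {k : ℕ} (c : Fin k → Bool) (j : Fin k) : Bool :=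
  xor (if h : (j:ℕ) = 0 then false else c ⟨(j:ℕ)-1, by have := j.isLt; omega⟩)
      (!c ⟨k-1, by have := j.isLt; omega⟩)
def Tinv {k : ℕ} (d : Fin k → Bool) (j : Fin k) : Bool :=
  if h : (j:ℕ) = k-1 then !d ⟨0, by have := j.isLt; omega⟩
  else xor (d ⟨(j:ℕ)+1, by have := j.isLt; omega⟩) (d ⟨0, by have := j.isLt; omega⟩)

lemma Tinv_apply_ne {k : ℕ} (d : Fin k → Bool) (j : Fin k) (h : (j:ℕ) ≠ k-1) :
    Tinv d j = xor (d ⟨(j:ℕ)+1, by have := j.isLt; omega⟩) (d ⟨0, by have := j.isLt; omega⟩) := by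
  rw [Tinv, dif_neg h]

lemma Tinv_apply_last {k : ℕ} (d : Fin k → Bool) (j : Fin k) (h : (j:ℕ) = k-1) :
    Tinv d j = !d ⟨0, by have := j.isLt; omega⟩ := by
  rw [Tinv, dif_pos h]

lemma Tcol_apply_zero {k : ℕ} (c : Fin k → Bool) (j : Fin k) (h : (j:ℕ) = 0) :
    Tcol c j = !c ⟨k-1, by have := j.isLt; omega⟩ := by
  rw [Tcol, dif_pos h, Bool.false_xor]

lemma Tcol_apply_ne {k : ℕ} (c : Fin k → Bool) (j : Fin k) (h : (j:ℕ) ≠ 0) :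
    Tcol c j = xor (c ⟨(j:ℕ)-1, by have := j.isLt; omega⟩) (!c ⟨k-1, by have := j.isLt; omega⟩) := by
  rw [Tcol, dif_neg h]

lemma Tinv_Tcol {k : ℕ} (c : Fin k → Bool) : Tinv (Tcol c) = c := by
  funext j
  have hj := j.isLt
  by_cases h1 : (j:ℕ) = k-1
  · rw [Tinv, dif_pos h1, Tcol]
    have hcc : c j = c ⟨k-1, by omega⟩ := by congr 1; ext; exact h1
    rw [hcc, dif_pos (show ((⟨0, by omega⟩ : Fin k) : ℕ) = 0 from rfl)]
    cases c ⟨k-1, by omega⟩ <;> simp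
  · rw [Tinv, dif_neg h1, Tcol, Tcol]
    rw [dif_neg (show ¬(((⟨(j:ℕ)+1, by omega⟩ : Fin k) : ℕ) = 0) by simp)]
    rw [dif_pos (show ((⟨0, by omega⟩ : Fin k) : ℕ) = 0 from rfl)]
    have hcc : c ⟨(j:ℕ)+1-1, by omega⟩ = c j := by congr 1
    rw [hcc]
    cases c ⟨k-1, by omega⟩ <;> cases c j <;> simp

lemma Tcol_Tinv {k : ℕ} (d : Fin k → Bool) : Tcol (Tinv d) = d := by
  funext j
  have hj := j.isLt
  have hlast : Tinv d ⟨k-1, by omega⟩ = !d ⟨0, by omega⟩ := by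
    rw [Tinv]; exact dif_pos rfl
  rw [Tcol, hlast]
  by_cases h1 : (j:ℕ) = 0
  · rw [dif_pos h1]
    have hcc : d j = d ⟨0, by omega⟩ := by congr 1; ext; exact h1
    rw [hcc]
    cases d ⟨0, by omega⟩ <;> simp
  · rw [dif_neg h1, Tinv, dif_neg (show ¬(((⟨(j:ℕ)-1, by omega⟩ : Fin k) : ℕ) = k-1) by simp; omega)]
    have hcc : d ⟨(j:ℕ)-1+1, by omega⟩ = d j := by congr 1; ext; simp; omega
    rw [hcc]
    cases d ⟨0, by omega⟩ <;> cases d j <;> simp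

lemma Tcol_letter (k : ℕ) (a : Fin (k+1)) : Tcol (letterCol k a) = letterCol k (sig k a) := by
  funext j
  have hj := j.isLt
  have ha := a.isLt
  rw [Tcol]
  simp only [letterCol, sig]
  by_cases h0 : (j:ℕ) = 0
  · rw [dif_pos h0, h0]
    apply bool_eq_of_iff
    simp only [Fin.val_mk, Bool.false_xor, Bool.not_eq_true', decide_eq_false_iff_not,
      decide_eq_true_eq]
    split_ifs <;> simp only [decide_eq_true_eq] <;> omega
  · rw [dif_neg h0]
    apply bool_eq_of_iff
    simp only [Fin.val_mk, bne_iff_ne, ne_eq, ← decide_not, decide_eq_decide,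
      decide_eq_true_eq]
    split_ifs <;> simp only [decide_eq_true_eq] <;> omega

lemma Tinv_letter (k : ℕ) (a : Fin (k+1)) : Tinv (letterCol k a) = letterCol k (tau k a) := by
  have h := Tcol_letter k (tau k a)
  rw [sig_tau] at h
  rw [← h, Tinv_Tcol]

lemma letterCol_valid (k : ℕ) (a : Fin (k+1)) : validCol k (letterCol k a) := by
  intro j j' hle h
  simp only [letterCol, decide_eq_true_eq] at *
  have : (j:ℕ) ≤ (j':ℕ) := hle
  omega

lemma reconAt_letter (k : ℕ) (a : Fin (k+1)) : reconAt k (letterCol k a) = (a:ℕ) := by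
  have ha := a.isLt
  unfold reconAt letterCol
  rcases Nat.eq_zero_or_pos (a:ℕ) with h0 | h0
  · rw [h0]
    rw [Finset.card_eq_zero, Finset.filter_eq_empty_iff]
    intro j _
    have := j.isLt
    simp only [decide_eq_true_eq]
    omega
  · have hk : k - (a:ℕ) < k := by omega
    have : (Finset.univ.filter fun j : Fin k => (decide (k - (j:ℕ) ≤ (a:ℕ))) = true)
        = Finset.Ici (⟨k - (a:ℕ), hk⟩ : Fin k) := by
      ext j
      simp only [Finset.mem_filter, Finset.mem_univ, true_and, decide_eq_true_eq,
        Finset.mem_Ici]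
      have := j.isLt
      constructor
      · intro h; show (⟨k - (a:ℕ), hk⟩ : Fin k) ≤ j; show k - (a:ℕ) ≤ (j:ℕ); omega
      · intro h; have : k - (a:ℕ) ≤ (j:ℕ) := h; omega
    rw [this, Fin.card_Ici]
    simp only [Fin.val_mk]
    omega

lemma reconAt_le {k : ℕ} (d : Fin k → Bool) : reconAt k d ≤ k := by
  unfold reconAt
  simpa using Finset.card_filter_le Finset.univ fun j => d j = true

lemma valid_eq_letterCol {k : ℕ} {d : Fin k → Bool} (hd : validCol k d) :
    d = letterCol k ⟨reconAt k d, Nat.lt_succ_of_le (reconAt_le d)⟩ := by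
  funext j
  have hj := j.isLt
  apply bool_eq_of_iff
  simp only [letterCol, Fin.val_mk, decide_eq_true_eq]
  constructor
  · intro h
    have hsub : Finset.Ici j ⊆ Finset.univ.filter fun j' => d j' = true := by
      intro j' hj'
      simp only [Finset.mem_Ici] at hj'
      simp only [Finset.mem_filter, Finset.mem_univ, true_and]
      exact hd j j' hj' h
    have := Finset.card_le_card hsub
    rw [Fin.card_Ici] at this
    unfold reconAt
    omega
  · intro h
    by_contra hdj
    have hsub : (Finset.univ.filter fun j' => d j' = true) ⊆ Finset.Ioi j := by
      intro j' hj'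
      simp only [Finset.mem_filter, Finset.mem_univ, true_and] at hj'
      simp only [Finset.mem_Ioi]
      by_contra hle'
      push_neg at hle'
      exact hdj (hd j' j hle' hj')
    have := Finset.card_le_card hsub
    rw [Fin.card_Ioi] at this
    unfold reconAt at h
    omega

lemma reconOpt_letter (k : ℕ) (a : Fin (k+1)) : reconOpt k (letterCol k a) = some a := by
  rw [reconOpt, if_pos (letterCol_valid k a)]
  congr 1
  ext
  simp [reconAt_letter]

lemma reconOpt_invalid {k : ℕ} {d : Fin k → Bool} (h : ¬ validCol k d) :
    reconOpt k d = none := by rw [reconOpt, if_neg h]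

lemma not_valid_iff {k : ℕ} (d : Fin k → Bool) :
    ¬ validCol k d ↔ ∃ u w : Fin k, (u:ℕ) ≤ (w:ℕ) ∧ d u = true ∧ d w = false := by
  unfold validCol
  push_neg
  constructor
  · rintro ⟨u, w, h1, h2, h3⟩
    exact ⟨u, w, h1, h2, by simpa using h3⟩
  · rintro ⟨u, w, h1, h2, h3⟩
    exact ⟨u, w, h1, h2, by simp [h3]⟩

set_option maxHeartbeats 1000000 in
lemma Tinv_invalid {k : ℕ} {v d : Fin k → Bool} {t : Fin k} (ht : (t:ℕ) ≠ 0)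
    (hv : validCol k v) (hagree : ∀ j, j ≠ t → d j = v j) (hd : ¬ validCol k d) :
    ¬ validCol k (Tinv d) := by
  have hkt := t.isLt
  have hk2 : 2 ≤ k := by omega
  rw [not_valid_iff] at hd ⊢
  obtain ⟨u, w, huw, hu, hw⟩ := hd
  have hwk := w.isLt
  have huk := u.isLt
  cases hd0 : d ⟨0, by omega⟩ with
  | false =>
    have hu0 : (u:ℕ) ≠ 0 := by
      intro h
      have : u = ⟨0, by omega⟩ := by ext; exact h
      rw [this, hd0] at hu; exact Bool.noConfusion hu
    refine ⟨⟨(u:ℕ)-1, by omega⟩, ⟨(w:ℕ)-1, by omega⟩, by simp only [Fin.val_mk]; omega, ?_, ?_⟩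
    · rw [Tinv_apply_ne _ _ (by simp; omega), hd0, Bool.xor_false]
      have : (⟨(u:ℕ)-1+1, by omega⟩ : Fin k) = u := by ext; simp; omega
      rw [this]; exact hu
    · rw [Tinv_apply_ne _ _ (by simp; omega), hd0, Bool.xor_false]
      have : (⟨(w:ℕ)-1+1, by omega⟩ : Fin k) = w := by ext; simp; omega
      rw [this]; exact hw
  | true =>
    have hv0 : v ⟨0, by omega⟩ = true := by
      rw [← hagree _ (by intro h; rw [Fin.ext_iff] at h; simp at h; omega)]
      exact hd0
    have hvall : ∀ j, v j = true := fun j => hv _ j (by show (0:ℕ) ≤ (j:ℕ); omega) hv0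
    have hwt : w = t := by
      by_contra h
      rw [hagree _ h, hvall] at hw
      exact Bool.noConfusion hw
    have hdt : d t = false := hwt ▸ hw
    refine ⟨⟨(t:ℕ)-1, by omega⟩, ⟨k-1, by omega⟩, by simp only [Fin.val_mk]; omega, ?_, ?_⟩
    · rw [Tinv_apply_ne _ _ (by simp; omega), hd0]
      have : (⟨(t:ℕ)-1+1, by omega⟩ : Fin k) = t := by ext; simp; omega
      rw [this, hdt]
      rfl
    · rw [Tinv_apply_last _ _ (by simp), hd0]
      rfl

set_option maxHeartbeats 1000000 in
lemma Tcol_invalid {k : ℕ} {v d : Fin k → Bool} {t : Fin k} (ht : (t:ℕ) ≠ k-1)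
    (hv : validCol k v) (hagree : ∀ j, j ≠ t → d j = v j) (hd : ¬ validCol k d) :
    ¬ validCol k (Tcol d) := by
  have hkt := t.isLt
  rw [not_valid_iff] at hd ⊢
  obtain ⟨u, w, huw, hu, hw⟩ := hd
  have hwk := w.isLt
  have huk := u.isLt
  cases hdk : d ⟨k-1, by omega⟩ with
  | true =>
    have hwk1 : (w:ℕ) ≠ k-1 := by
      intro h
      have : w = ⟨k-1, by omega⟩ := by ext; exact h
      rw [this, hdk] at hw; exact Bool.noConfusion hw
    refine ⟨⟨(u:ℕ)+1, by omega⟩, ⟨(w:ℕ)+1, by omega⟩, by simp only [Fin.val_mk]; omega, ?_, ?_⟩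
    · rw [Tcol_apply_ne _ _ (by simp), hdk, Bool.not_true, Bool.xor_false]
      have : (⟨(u:ℕ)+1-1, by omega⟩ : Fin k) = u := by ext; simp
      rw [this]; exact hu
    · rw [Tcol_apply_ne _ _ (by simp), hdk, Bool.not_true, Bool.xor_false]
      have : (⟨(w:ℕ)+1-1, by omega⟩ : Fin k) = w := by ext; simp
      rw [this]; exact hw
  | false =>
    have hvk : v ⟨k-1, by omega⟩ = false := by
      rw [← hagree _ (by intro h; rw [Fin.ext_iff] at h; simp at h; omega)]
      exact hdk
    have hvall : ∀ j, v j = false := by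
      intro j
      cases hvj : v j with
      | false => rfl
      | true =>
        have := hv j ⟨k-1, by omega⟩ (by show (j:ℕ) ≤ k-1; have := j.isLt; omega) hvj
        rw [hvk] at this; exact Bool.noConfusion this
    have hut : u = t := by
      by_contra h
      rw [hagree _ h, hvall] at hu
      exact Bool.noConfusion hu
    have hdt : d t = true := hut ▸ hu
    refine ⟨⟨0, by omega⟩, ⟨(t:ℕ)+1, by omega⟩, by simp only [Fin.val_mk]; omega, ?_, ?_⟩
    · rw [Tcol_apply_zero _ _ (by simp), hdk]
      rfl
    · rw [Tcol_apply_ne _ _ (by simp), hdk, Bool.not_false, Bool.xor_true]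
      have : (⟨(t:ℕ)+1-1, by omega⟩ : Fin k) = t := by ext; simp
      rw [this, hdt]
      rfl

end Stmt19

namespace Stmt19

lemma hamming_eq {n : ℕ} (x y u v : Fin n → Bool)
    (h : ∀ p, (x p ≠ y p) ↔ (u p ≠ v p)) : hammingDist x y = hammingDist u v := by
  show (Finset.univ.filter fun p => x p ≠ y p).card
      = (Finset.univ.filter fun p => u p ≠ v p).card
  congr 1
  apply Finset.filter_congr
  intro p _
  simpa using h p

lemma up {k n : ℕ} {i : ℕ} (hi : i + 1 < k) (s : Fin n → Fin (k+1))
    (z : Fin n → Option (Fin (k+1)))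
    (hz : z ∈ channelOut k n ⟨i+1, hi⟩ (fun p => sig k (s p))) :
    (fun p => Option.map (tau k) (z p)) ∈ channelOut k n ⟨i, Nat.lt_of_succ_lt hi⟩ s := by
  obtain ⟨R, hdist, hrows, hrecon⟩ := hz
  have hk1 : 0 < k := by omega
  have hdec : ∀ (j : Fin k) (p : Fin n),
      decompRow k n (fun p => sig k (s p)) j p = Tcol (letterCol k (s p)) j := by
    intro j p
    rw [Tcol_letter]
    rfl
  have hR : ∀ (j : Fin k) (p : Fin n), j ≠ ⟨i+1, hi⟩ → R j p = Tcol (letterCol k (s p)) j := by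
    intro j p hne
    rw [congrFun (hrows j hne) p, hdec]
  have ne0 : (⟨0, hk1⟩ : Fin k) ≠ ⟨i+1, hi⟩ := by
    simp [Fin.ext_iff]
  refine ⟨fun j p => Tinv (fun j' => R j' p) j, ?_, ?_, ?_⟩
  · have key : ∀ p,
        ((fun j p => Tinv (fun j' => R j' p) j) (⟨i, Nat.lt_of_succ_lt hi⟩ : Fin k) p
          ≠ decompRow k n s ⟨i, Nat.lt_of_succ_lt hi⟩ p)
        ↔ (R ⟨i+1, hi⟩ p ≠ decompRow k n (fun p => sig k (s p)) ⟨i+1, hi⟩ p) := by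
      intro p
      have l1 : Tinv (fun j' => R j' p) ⟨i, Nat.lt_of_succ_lt hi⟩
          = xor (R ⟨i+1, hi⟩ p) (R ⟨0, hk1⟩ p) := by
        rw [Tinv_apply_ne _ _ (by simp; omega)]
      have l2 : decompRow k n s ⟨i, Nat.lt_of_succ_lt hi⟩ p
          = xor (Tcol (letterCol k (s p)) ⟨i+1, hi⟩) (Tcol (letterCol k (s p)) ⟨0, hk1⟩) := by
        rw [decompRow_eq_letterCol]
        conv_lhs => rw [← Tinv_Tcol (letterCol k (s p))]
        rw [Tinv_apply_ne _ _ (by simp; omega)]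
      simp only [l1, l2, hdec, hR _ p ne0]
      exact xor_ne_xor _ _ _
    calc hammingDist ((fun j p => Tinv (fun j' => R j' p) j) (⟨i, Nat.lt_of_succ_lt hi⟩ : Fin k))
          (decompRow k n s ⟨i, Nat.lt_of_succ_lt hi⟩)
        = hammingDist (R ⟨i+1, hi⟩) (decompRow k n (fun p => sig k (s p)) ⟨i+1, hi⟩) :=
          hamming_eq _ _ _ _ key
      _ ≤ 1 := hdist
  · intro j hne
    funext p
    have hjlt := j.isLt
    have hji : (j:ℕ) ≠ i := by
      intro h
      exact hne (Fin.ext h)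
    show Tinv (fun j' => R j' p) j = decompRow k n s j p
    rw [decompRow_eq_letterCol]
    conv_rhs => rw [← Tinv_Tcol (letterCol k (s p))]
    by_cases hlast : (j:ℕ) = k-1
    · rw [Tinv_apply_last _ _ hlast, Tinv_apply_last _ _ hlast, hR _ p ne0]
    · rw [Tinv_apply_ne _ _ hlast, Tinv_apply_ne _ _ hlast, hR _ p ne0,
        hR ⟨(j:ℕ)+1, by omega⟩ p (by intro hh; have h2 : (j:ℕ)+1 = i+1 := congrArg Fin.val hh; omega)]
  · intro p
    show Option.map (tau k) (z p) = _
    rw [hrecon p]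
    by_cases hval : validCol k (fun j => R j p)
    · have hlet := valid_eq_letterCol hval
      rw [reconOpt, if_pos hval]
      show _ = reconOpt k (Tinv (fun j' => R j' p))
      rw [show (fun j' => R j' p) = letterCol k
          ⟨reconAt k (fun j => R j p), Nat.lt_succ_of_le (reconAt_le _)⟩ from hlet]
      rw [Tinv_letter, reconOpt_letter]
      simp only [Option.map_some, Option.some.injEq]
      congr 1
      ext
      exact reconAt_letter k _
    · rw [reconOpt_invalid hval]
      have hinv : ¬ validCol k (Tinv (fun j' => R j' p)) := by
        apply Tinv_invalid (t := ⟨i+1, hi⟩) (v := letterCol k (sig k (s p)))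
          (by show i+1 ≠ 0; omega) (letterCol_valid k (sig k (s p))) ?_ hval
        intro j hne
        rw [hR j p hne, Tcol_letter]
      rw [show reconOpt k (fun j => Tinv (fun j' => R j' p) j)
          = reconOpt k (Tinv (fun j' => R j' p)) from rfl, reconOpt_invalid hinv]
      rfl

lemma down {k n : ℕ} {i : ℕ} (hi : i + 1 < k) (s : Fin n → Fin (k+1))
    (z : Fin n → Option (Fin (k+1)))
    (hz : z ∈ channelOut k n ⟨i, Nat.lt_of_succ_lt hi⟩ (fun p => tau k (s p))) :
    (fun p => Option.map (sig k) (z p)) ∈ channelOut k n ⟨i+1, hi⟩ s := by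
  obtain ⟨R, hdist, hrows, hrecon⟩ := hz
  have hk1 : 0 < k := by omega
  have hdec : ∀ (j : Fin k) (p : Fin n),
      decompRow k n (fun p => tau k (s p)) j p = Tinv (letterCol k (s p)) j := by
    intro j p
    rw [Tinv_letter]
    rfl
  have hR : ∀ (j : Fin k) (p : Fin n), j ≠ ⟨i, Nat.lt_of_succ_lt hi⟩ →
      R j p = Tinv (letterCol k (s p)) j := by
    intro j p hne
    rw [congrFun (hrows j hne) p, hdec]
  have nek : (⟨k-1, by omega⟩ : Fin k) ≠ ⟨i, Nat.lt_of_succ_lt hi⟩ := by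
    intro hh
    have h2 : k-1 = i := congrArg Fin.val hh
    omega
  refine ⟨fun j p => Tcol (fun j' => R j' p) j, ?_, ?_, ?_⟩
  · have key : ∀ p,
        ((fun j p => Tcol (fun j' => R j' p) j) (⟨i+1, hi⟩ : Fin k) p
          ≠ decompRow k n s ⟨i+1, hi⟩ p)
        ↔ (R ⟨i, Nat.lt_of_succ_lt hi⟩ p
          ≠ decompRow k n (fun p => tau k (s p)) ⟨i, Nat.lt_of_succ_lt hi⟩ p) := by
      intro p
      have l1 : Tcol (fun j' => R j' p) ⟨i+1, hi⟩
          = xor (R ⟨i, Nat.lt_of_succ_lt hi⟩ p) (!R ⟨k-1, by omega⟩ p) := by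
        rw [Tcol_apply_ne _ _ (by show i+1 ≠ 0; omega)]
        rfl
      have l2 : decompRow k n s ⟨i+1, hi⟩ p
          = xor (Tinv (letterCol k (s p)) ⟨i, Nat.lt_of_succ_lt hi⟩)
              (!Tinv (letterCol k (s p)) ⟨k-1, by omega⟩) := by
        rw [decompRow_eq_letterCol]
        conv_lhs => rw [← Tcol_Tinv (letterCol k (s p))]
        rw [Tcol_apply_ne _ _ (by show i+1 ≠ 0; omega)]
        rfl
      simp only [l1, l2, hdec, hR _ p nek]
      exact xor_ne_xor _ _ _
    calc hammingDist ((fun j p => Tcol (fun j' => R j' p) j) (⟨i+1, hi⟩ : Fin k))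
          (decompRow k n s ⟨i+1, hi⟩)
        = hammingDist (R ⟨i, Nat.lt_of_succ_lt hi⟩)
            (decompRow k n (fun p => tau k (s p)) ⟨i, Nat.lt_of_succ_lt hi⟩) :=
          hamming_eq _ _ _ _ key
      _ ≤ 1 := hdist
  · intro j hne
    funext p
    have hjlt := j.isLt
    have hji : (j:ℕ) ≠ i+1 := by
      intro h
      exact hne (Fin.ext h)
    show Tcol (fun j' => R j' p) j = decompRow k n s j p
    rw [decompRow_eq_letterCol]
    conv_rhs => rw [← Tcol_Tinv (letterCol k (s p))]
    by_cases h0 : (j:ℕ) = 0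
    · rw [Tcol_apply_zero _ _ h0, Tcol_apply_zero _ _ h0, hR _ p nek]
    · rw [Tcol_apply_ne _ _ h0, Tcol_apply_ne _ _ h0, hR _ p nek,
        hR ⟨(j:ℕ)-1, by omega⟩ p (by intro hh; have h2 : (j:ℕ)-1 = i := congrArg Fin.val hh; omega)]
  · intro p
    show Option.map (sig k) (z p) = _
    rw [hrecon p]
    by_cases hval : validCol k (fun j => R j p)
    · have hlet := valid_eq_letterCol hval
      rw [reconOpt, if_pos hval]
      show _ = reconOpt k (Tcol (fun j' => R j' p))
      rw [show (fun j' => R j' p) = letterCol k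
          ⟨reconAt k (fun j => R j p), Nat.lt_succ_of_le (reconAt_le _)⟩ from hlet]
      rw [Tcol_letter, reconOpt_letter]
      simp only [Option.map_some, Option.some.injEq]
      congr 1
      ext
      exact reconAt_letter k _
    · rw [reconOpt_invalid hval]
      have hinv : ¬ validCol k (Tcol (fun j' => R j' p)) := by
        apply Tcol_invalid (t := ⟨i, Nat.lt_of_succ_lt hi⟩) (v := letterCol k (tau k (s p)))
          (by show i ≠ k-1; omega) (letterCol_valid k (tau k (s p))) ?_ hval
        intro j hne
        rw [hR j p hne, Tinv_letter]
      rw [show reconOpt k (fun j => Tcol (fun j' => R j' p) j)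
          = reconOpt k (Tcol (fun j' => R j' p)) from rfl, reconOpt_invalid hinv]
      rfl

lemma sigMap_injective (k n : ℕ) :
    Function.Injective (fun (c : Fin n → Fin (k+1)) => fun p => sig k (c p)) := by
  intro c c' h
  funext p
  exact sig_injective k (congrFun h p)

lemma tauMap_injective (k n : ℕ) :
    Function.Injective (fun (c : Fin n → Fin (k+1)) => fun p => tau k (c p)) := by
  intro c c' h
  funext p
  exact tau_injective k (congrFun h p)

lemma cecc_up {k n : ℕ} {i : ℕ} (hi : i + 1 < k) (C : Set (Fin n → Fin (k + 1)))
    (hC : isCECC k n ⟨i, Nat.lt_of_succ_lt hi⟩ C) :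
    isCECC k n ⟨i+1, hi⟩ ((fun (c : Fin n → Fin (k+1)) => fun p => sig k (c p)) '' C) := by
  rintro a ⟨c, hc, rfl⟩ b ⟨c', hc', rfl⟩ hne
  have hcc : c ≠ c' := by
    rintro rfl
    exact hne rfl
  rw [Set.disjoint_left]
  intro z hza hzb
  exact Set.disjoint_left.mp (hC c hc c' hc' hcc) (up hi c z hza) (up hi c' z hzb)

lemma cecc_down {k n : ℕ} {i : ℕ} (hi : i + 1 < k) (C : Set (Fin n → Fin (k + 1)))
    (hC : isCECC k n ⟨i+1, hi⟩ C) :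
    isCECC k n ⟨i, Nat.lt_of_succ_lt hi⟩
      ((fun (c : Fin n → Fin (k+1)) => fun p => tau k (c p)) '' C) := by
  rintro a ⟨c, hc, rfl⟩ b ⟨c', hc', rfl⟩ hne
  have hcc : c ≠ c' := by
    rintro rfl
    exact hne rfl
  rw [Set.disjoint_left]
  intro z hza hzb
  exact Set.disjoint_left.mp (hC c hc c' hc' hcc) (down hi c z hza) (down hi c' z hzb)

lemma max_adj (k n : ℕ) (i : ℕ) (hi : i + 1 < k) :
    maxCECC k n ⟨i, Nat.lt_of_succ_lt hi⟩ = maxCECC k n ⟨i+1, hi⟩ := by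
  unfold maxCECC
  congr 1
  ext m
  simp only [Set.mem_setOf_eq]
  constructor
  · rintro ⟨C, hC, rfl⟩
    exact ⟨_, cecc_up hi C hC, Set.ncard_image_of_injective C (sigMap_injective k n)⟩
  · rintro ⟨C, hC, rfl⟩
    exact ⟨_, cecc_down hi C hC, Set.ncard_image_of_injective C (tauMap_injective k n)⟩

lemma max_all (k n : ℕ) : ∀ a b : Fin k, maxCECC k n a = maxCECC k n b := by
  have key : ∀ (j : ℕ) (hj : j < k), maxCECC k n ⟨j, hj⟩ = maxCECC k n ⟨0, by omega⟩ := by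
    intro j
    induction j with
    | zero => intro hj; rfl
    | succ m ih =>
      intro hj
      rw [← max_adj k n m hj]
      exact ih (Nat.lt_of_succ_lt hj)
  intro a b
  have ha := key (a:ℕ) a.isLt
  have hb := key (b:ℕ) b.isLt
  rw [show a = ⟨(a:ℕ), a.isLt⟩ from (Fin.ext rfl), show b = ⟨(b:ℕ), b.isLt⟩ from (Fin.ext rfl),
    ha, hb]

end Stmt19

/-- If there is a code `C ⊆ {0,…,k}^n` correcting any single substitution error in
channel `i`, then there is a code `C'` of the same cardinality correcting any single
substitution error in channel `i+1`; in particular the maximal cardinalities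
`S_k(n; e_i)` are equal for all channels `i ∈ {0,…,k-1}`. -/
theorem stmt_19 (k n : ℕ) (i : ℕ) (hi : i + 1 < k)
    (C : Set (Fin n → Fin (k + 1)))
    (hC : isCECC k n ⟨i, Nat.lt_of_succ_lt hi⟩ C) :
    (∃ C' : Set (Fin n → Fin (k + 1)),
        C'.ncard = C.ncard ∧ isCECC k n ⟨i + 1, hi⟩ C') ∧
    ∀ a b : Fin k, maxCECC k n a = maxCECC k n b := by
  constructor
  · exact ⟨_, Set.ncard_image_of_injective C (Stmt19.sigMap_injective k n),
      Stmt19.cecc_up hi C hC⟩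
  · exact Stmt19.max_all k n
end
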